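/- arXiv:2008.04593 — 3 statements merged into one kernel-verified Lean document; each statement's English description precedes it below -/
import Mathlib

section
/- Let M be a monotone gridding matrix whose cell graph G_M contains a cycle. Then for every p ≥ 1 there exists a monotone gridding matrix M_p such that Grid(M_p) ⊆ Grid(M) and the cell graph of M_p is a proper turning path of length at least p. -/
namespace PPM

noncomputable section

/-- Intervalicity: minimum number of pairwise disjoint integer intervals covering `A`. -/
def intervalicity {n : ℕ} (A : Finset (Fin n)) : ℕ :=
  sInf {m | ∃ F : Finset (Finset (Fin n)), F.card = m ∧
    (∀ I ∈ F, ∃ a b : Fin n, I = Finset.Icc a b) ∧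
    (F : Set (Finset (Fin n))).PairwiseDisjoint id ∧
    F.sup id = A}

/-- Grid-complexity of a point set. -/
def gridComplexity {n : ℕ} (S : Finset (Fin n × Fin n)) : ℕ :=
  max (intervalicity (S.image Prod.fst)) (intervalicity (S.image Prod.snd))

/-- The diagram of a permutation. -/
def diagram {n : ℕ} (π : Equiv.Perm (Fin n)) : Finset (Fin n × Fin n) :=
  Finset.univ.image (fun i => (i, π i))

/-- Rooted binary trees with labeled leaves. -/
inductive GTree (α : Type) where
  | leaf : α → GTree α
  | node : GTree α → GTree α → GTree α

namespace GTree
variable {α : Type}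

def leafList : GTree α → List α
  | leaf a => [a]
  | node l r => l.leafList ++ r.leafList

def subtrees : GTree α → List (GTree α)
  | leaf a => [leaf a]
  | node l r => node l r :: (l.subtrees ++ r.subtrees)

def IsCaterpillar : GTree α → Prop
  | leaf _ => True
  | node l r => ((∃ a, l = leaf a) ∨ (∃ a, r = leaf a)) ∧ IsCaterpillar l ∧ IsCaterpillar r

def leafDepth [DecidableEq α] : GTree α → α → ℕ
  | leaf _, _ => 0
  | node l r, a => if a ∈ l.leafList then l.leafDepth a + 1 else r.leafDepth a + 1

end GTree

/-- Grid-width of a grid tree. -/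
def treeGW {n : ℕ} (T : GTree (Fin n × Fin n)) : ℕ :=
  (T.subtrees.map (fun t => gridComplexity t.leafList.toFinset)).foldr max 0

/-- `T` is a grid tree of `π`: its leaves are labeled bijectively by the points of `π`. -/
def IsGridTree {n : ℕ} (π : Equiv.Perm (Fin n)) (T : GTree (Fin n × Fin n)) : Prop :=
  T.leafList.Nodup ∧ T.leafList.toFinset = diagram π

/-- Grid-width of a permutation. -/
def gw {n : ℕ} (π : Equiv.Perm (Fin n)) : ℕ :=
  sInf {w | ∃ T, IsGridTree π T ∧ treeGW T = w}

/-- Path-width of a permutation: minimum over caterpillar grid trees. -/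
def pw {n : ℕ} (π : Equiv.Perm (Fin n)) : ℕ :=
  sInf {w | ∃ T, IsGridTree π T ∧ T.IsCaterpillar ∧ treeGW T = w}

/-- The `i`-th prefix point set of `π` in `σ`-ordering. -/
def prefixSet {n : ℕ} (π σ : Equiv.Perm (Fin n)) (i : Fin n) : Finset (Fin n × Fin n) :=
  (Finset.univ.filter (fun j => j ≤ i)).image (fun j => (σ j, π (σ j)))

/-- Path-width of `π` in `σ`-ordering. -/
def pwOrd {n : ℕ} (π σ : Equiv.Perm (Fin n)) : ℕ :=
  Finset.univ.sup (fun i => gridComplexity (prefixSet π σ i))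

/-- Horizontal path-width: `σ` is the identity (left-to-right order). -/
def hpw {n : ℕ} (π : Equiv.Perm (Fin n)) : ℕ := pwOrd π 1

/-- Vertical path-width: `σ = π⁻¹` (bottom-to-top order). -/
def vpw {n : ℕ} (π : Equiv.Perm (Fin n)) : ℕ := pwOrd π π⁻¹

/-- Pattern containment: `τ` contains `π`. -/
def Contains {n k : ℕ} (τ : Equiv.Perm (Fin n)) (π : Equiv.Perm (Fin k)) : Prop :=
  ∃ f : Fin k → Fin n, StrictMono f ∧ ∀ i j, π i < π j ↔ τ (f i) < τ (f j)

/-- A permutation class, given by its members of each length. -/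
abbrev PermClass := ∀ n : ℕ, Set (Equiv.Perm (Fin n))

/-- Closure under pattern containment. -/
def IsPermClass (C : PermClass) : Prop :=
  ∀ {n k : ℕ} (τ : Equiv.Perm (Fin n)) (π : Equiv.Perm (Fin k)),
    τ ∈ C n → Contains τ π → π ∈ C k

/-- `π` is griddable by the monotone gridding matrix `M`
(`some true` = Inc, `some false` = Dec, `none` = empty);
columns are the first index, rows the second. -/
def MonGriddable {n k l : ℕ} (M : Fin k → Fin l → Option Bool)
    (π : Equiv.Perm (Fin n)) : Prop :=
  ∃ (c : Fin n → Fin k) (r : Fin n → Fin l), Monotone c ∧ Monotone r ∧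
    (∀ i : Fin n, (M (c i) (r (π i))).isSome) ∧
    (∀ i j : Fin n, i < j → c i = c j → r (π i) = r (π j) →
      ∀ b, M (c i) (r (π i)) = some b → (if b then π i < π j else π j < π i))

/-- Adjacency of cells in the cell graph of a monotone gridding matrix:
both cells nonempty, sharing a row or a column, with only empty cells in between. -/
def MonCellAdj {k l : ℕ} (M : Fin k → Fin l → Option Bool)
    (p q : Fin k × Fin l) : Prop :=
  (M p.1 p.2).isSome ∧ (M q.1 q.2).isSome ∧
  ((p.1 = q.1 ∧ p.2 ≠ q.2 ∧ ∀ j : Fin l,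
      ((p.2 < j ∧ j < q.2) ∨ (q.2 < j ∧ j < p.2)) → M p.1 j = Option.none) ∨
   (p.2 = q.2 ∧ p.1 ≠ q.1 ∧ ∀ i : Fin k,
      ((p.1 < i ∧ i < q.1) ∨ (q.1 < i ∧ i < p.1)) → M i p.2 = Option.none))

/-- The cell graph of a monotone gridding matrix. -/
def monCellGraph {k l : ℕ} (M : Fin k → Fin l → Option Bool) :
    SimpleGraph (Fin k × Fin l) :=
  SimpleGraph.fromRel (MonCellAdj M)

/-- A consistent orientation of a monotone gridding matrix, signs coded by `Bool`. -/
def ConsistentOrientation {k l : ℕ} (M : Fin k → Fin l → Option Bool)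
    (c : Fin k → Bool) (r : Fin l → Bool) : Prop :=
  ∀ i j, (M i j = some true → c i = r j) ∧ (M i j = some false → c i ≠ r j)

/-- The refinement `M^{×q}` of a monotone gridding matrix. -/
def refine {k l : ℕ} (M : Fin k → Fin l → Option Bool) (q : ℕ) :
    Fin (q * k) → Fin (q * l) → Option Bool :=
  fun i j =>
    match M ⟨i.val / q, Nat.div_lt_of_lt_mul i.isLt⟩
            ⟨j.val / q, Nat.div_lt_of_lt_mul j.isLt⟩ with
    | some true => if i.val % q = j.val % q then some true else none
    | some false => if i.val % q + j.val % q = q - 1 then some false else none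
    | none => none

/-- The restriction of `π` to the position set `P` is order-isomorphic to a member of `C`. -/
def CellPattern {n : ℕ} (π : Equiv.Perm (Fin n)) (P : Finset (Fin n))
    (C : PermClass) : Prop :=
  ∃ m : ℕ, ∃ σ ∈ C m, ∃ f : Fin m → Fin n, StrictMono f ∧
    Finset.univ.image f = P ∧ ∀ i j, σ i < σ j ↔ π (f i) < π (f j)

/-- `π` is griddable by a gridding matrix with permutation-class entries. -/
def GenGriddable {n k l : ℕ} (M : Fin k → Fin l → PermClass)
    (π : Equiv.Perm (Fin n)) : Prop :=
  ∃ (c : Fin n → Fin k) (r : Fin n → Fin l), Monotone c ∧ Monotone r ∧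
    ∀ (a : Fin k) (b : Fin l),
      (Finset.univ.filter (fun i => c i = a ∧ r (π i) = b) = ∅) ∨
      CellPattern π (Finset.univ.filter (fun i => c i = a ∧ r (π i) = b)) (M a b)

/-- A class containing some nonempty permutation. -/
def ClassNonempty (C : PermClass) : Prop := ∃ n, 0 < n ∧ (C n).Nonempty

/-- An infinite class: members of arbitrarily large lengths. -/
def ClassInfinite (C : PermClass) : Prop := ∀ m, ∃ n, m ≤ n ∧ (C n).Nonempty

/-- Cell adjacency for a general gridding matrix. -/
def GenCellAdj {k l : ℕ} (M : Fin k → Fin l → PermClass)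
    (p q : Fin k × Fin l) : Prop :=
  ClassNonempty (M p.1 p.2) ∧ ClassNonempty (M q.1 q.2) ∧
  ((p.1 = q.1 ∧ p.2 ≠ q.2 ∧ ∀ j : Fin l,
      ((p.2 < j ∧ j < q.2) ∨ (q.2 < j ∧ j < p.2)) → ¬ ClassNonempty (M p.1 j)) ∨
   (p.2 = q.2 ∧ p.1 ≠ q.1 ∧ ∀ i : Fin k,
      ((p.1 < i ∧ i < q.1) ∨ (q.1 < i ∧ i < p.1)) → ¬ ClassNonempty (M i p.2)))

/-- The cell graph of a general gridding matrix. -/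
def genCellGraph {k l : ℕ} (M : Fin k → Fin l → PermClass) :
    SimpleGraph (Fin k × Fin l) :=
  SimpleGraph.fromRel (GenCellAdj M)

/-- Unbounded horizontal path-width of a class. -/
def UnboundedHPW (C : PermClass) : Prop := ∀ K, ∃ n, ∃ π ∈ C n, K < hpw π

/-- Unbounded vertical path-width of a class. -/
def UnboundedVPW (C : PermClass) : Prop := ∀ K, ∃ n, ∃ π ∈ C n, K < vpw π

/-- `(p, q)` is a bumper. -/
def Bumper {k l : ℕ} (M : Fin k → Fin l → PermClass) (p q : Fin k × Fin l) : Prop :=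
  (UnboundedHPW (M q.1 q.2) ∧ p.1 = q.1) ∨ (UnboundedVPW (M q.1 q.2) ∧ p.2 = q.2)

/-- The cell graph of `M` contains a bumper-ended path. -/
def HasBumperEndedPath {k l : ℕ} (M : Fin k → Fin l → PermClass) : Prop :=
  ∃ (L : List (Fin k × Fin l)) (h : 2 ≤ L.length),
    List.Chain' (genCellGraph M).Adj L ∧ L.Nodup ∧
    Bumper M (L.get ⟨1, by omega⟩) (L.get ⟨0, by omega⟩) ∧
    Bumper M (L.get ⟨L.length - 2, by omega⟩) (L.get ⟨L.length - 1, by omega⟩)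

/-- Horizontal alternation: all even entries (1-based values) precede all odd entries. -/
def IsHorizAlt {n : ℕ} (π : Equiv.Perm (Fin n)) : Prop :=
  ∀ i j : Fin n, i < j → ¬(Odd ((π i).val + 1) ∧ Even ((π j).val + 1))

/-- `σ` is monotone on the positions satisfying `P`. -/
def MonOn {n : ℕ} (σ : Equiv.Perm (Fin n)) (P : Fin n → Prop) : Prop :=
  (∀ i j, i < j → P i → P j → σ i < σ j) ∨ (∀ i j, i < j → P i → P j → σ j < σ i)

/-- Monotone horizontal alternation. -/
def IsMonHorizAlt {n : ℕ} (σ : Equiv.Perm (Fin n)) : Prop :=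
  IsHorizAlt σ ∧ MonOn σ (fun i => Odd ((σ i).val + 1)) ∧
    MonOn σ (fun i => Even ((σ i).val + 1))

/-- The 1×2 horizontal monotone juxtaposition matrix. -/
def juxH (b₁ b₂ : Bool) : Fin 2 → Fin 1 → Option Bool :=
  fun i _ => some (if i = 0 then b₁ else b₂)

/-- No three consecutive cells of the list share a row or a column. -/
def ProperTurning {k l : ℕ} (L : List (Fin k × Fin l)) : Prop :=
  ∀ a b c : Fin k × Fin l, [a, b, c] <:+: L →
    ¬(a.1 = b.1 ∧ b.1 = c.1) ∧ ¬(a.2 = b.2 ∧ b.2 = c.2)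

/-- The class of increasing (`true`) or decreasing (`false`) permutations. -/
def monClass (b : Bool) : PermClass :=
  fun n => {π | ∀ i j : Fin n, i < j → (if b then π i < π j else π j < π i)}

end

end PPM

open PPM

section CycleReduce

variable {α : Type*}

private lemma per_mul {m : ℕ} {u : ℕ → α} (hper : ∀ t, u (t + m) = u t) :
    ∀ c t, u (t + m * c) = u t := by
  intro c
  induction c with
  | zero => intro t; simp
  | succ c ih =>
    intro t
    have : t + m * (c+1) = (t + m * c) + m := by ring
    rw [this, hper, ih]

private lemma per_mod {m : ℕ} {u : ℕ → α} (hm : 0 < m) (hper : ∀ t, u (t + m) = u t)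
    (t : ℕ) : u t = u (t % m) := by
  conv_lhs => rw [← Nat.mod_add_div t m]
  exact per_mul hper (t / m) (t % m)

private lemma per_eq {m : ℕ} {u : ℕ → α} (hm : 0 < m) (hper : ∀ t, u (t + m) = u t)
    {a b : ℕ} (hab : a % m = b % m) : u a = u b := by
  rw [per_mod hm hper a, per_mod hm hper b, hab]

/-- Axioms for the two link relations (same-row / same-column). -/
structure RCAxioms (R C : α → α → Prop) : Prop where
  Rsymm : ∀ x y, R x y → R y x
  Csymm : ∀ x y, C x y → C y x
  disj : ∀ x y, R x y → C x y → False
  Rirr : ∀ x, ¬ R x x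
  Cirr : ∀ x, ¬ C x x
  Rtrans : ∀ x y z, R x y → R y z → x ≠ z → R x z
  Ctrans : ∀ x y z, C x y → C y z → x ≠ z → C x z

lemma RCAxioms.swap {R C : α → α → Prop} (ax : RCAxioms R C) : RCAxioms C R :=
  ⟨ax.Csymm, ax.Rsymm, fun x y hc hr => ax.disj x y hr hc, ax.Cirr, ax.Rirr,
    ax.Ctrans, ax.Rtrans⟩

/-- A periodic cyclic sequence of cells with links, injective on a window,
containing both a row link and a column link. -/
structure CycData (R C : α → α → Prop) (m : ℕ) (u : ℕ → α) : Prop where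
  hm : 0 < m
  per : ∀ t, u (t + m) = u t
  inj : ∀ s t, s < m → t < m → u s = u t → s = t
  link : ∀ t, R (u t) (u (t+1)) ∨ C (u t) (u (t+1))
  exR : ∃ j, R (u j) (u (j+1))
  exC : ∃ j, C (u j) (u (j+1))

lemma CycData.swap {R C : α → α → Prop} {m u} (h : CycData R C m u) : CycData C R m u :=
  ⟨h.hm, h.per, h.inj, fun t => (h.link t).symm, h.exC, h.exR⟩

lemma CycData.edge_mod {R C : α → α → Prop} {m u} (h : CycData R C m u)
    {P : α → α → Prop} {j : ℕ} (hj : P (u j) (u (j+1))) :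
    P (u (j % m)) (u (j % m + 1)) := by
  have h1 : u (j % m) = u j := per_eq h.hm h.per (Nat.mod_mod_of_dvd j (dvd_refl m))
  have h2 : u (j % m + 1) = u (j + 1) := per_eq h.hm h.per (by rw [Nat.mod_add_mod])
  rw [h1, h2]; exact hj

private lemma shrinkRC {R C : α → α → Prop} (ax : RCAxioms R C) {m : ℕ} {u : ℕ → α}
    (h : CycData R C m u) (hm3 : 3 ≤ m)
    {i : ℕ} (hi : i < m) (h1 : R (u i) (u (i+1))) (h2 : R (u (i+1)) (u (i+2))) :
    ∃ m' u', m' < m ∧ CycData R C m' u' ∧ (∀ t, ∃ s, u' t = u s) := by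
  set m' := m - 1 with hm'
  set r := i + 2 with hr
  refine ⟨m', fun t => u ((t % m' + r) % m), by omega, ?_, fun t => ⟨(t % m' + r) % m, rfl⟩⟩
  have hm0 : 0 < m := by omega
  have hm'0 : 0 < m' := by omega
  have hkey : ∀ t : ℕ, t % m' = m' - 1 →
      u ((t % m' + r) % m) = u i ∧ u (((t+1) % m' + r) % m) = u ((i+2) % m) := by
    intro t ht
    have h01 : (t+1) % m' = 0 := by
      rcases Nat.lt_or_ge 1 m' with hc | hc
      · have e : (1:ℕ) % m' = 1 := Nat.mod_eq_of_lt hc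
        rw [Nat.add_mod, ht, e, Nat.sub_add_cancel (by omega), Nat.mod_self]
      · exact absurd hc (by omega)
    constructor
    · rw [ht]
      have e : m' - 1 + r = i + m := by omega
      rw [e, Nat.add_mod_right, Nat.mod_eq_of_lt hi]
    · rw [h01, Nat.zero_add, hr]
  have hiNe : u i ≠ u ((i+2) % m) := by
    intro hEq
    have h2m : (i+2) % m < m := Nat.mod_lt _ hm0
    have heq2 := h.inj i ((i+2) % m) hi h2m hEq
    have : (i+2) % m = i + 2 ∨ (m ≤ i + 2 ∧ (i+2) % m = i + 2 - m) := by
      rcases Nat.lt_or_ge (i+2) m with hc | hc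
      · exact Or.inl (Nat.mod_eq_of_lt hc)
      · right
        refine ⟨hc, ?_⟩
        have hlt : i + 2 - m < m := by omega
        conv_lhs => rw [(by omega : i + 2 = (i + 2 - m) + m)]
        rw [Nat.add_mod_right, Nat.mod_eq_of_lt hlt]
    rcases this with hcase | ⟨hge, hcase⟩
    · rw [hcase] at heq2; omega
    · rw [hcase] at heq2; omega
  have hwrapR : R (u i) (u ((i+2) % m)) := by
    have h2' : R (u (i+1)) (u ((i+2) % m)) := by
      have e : u ((i+2) % m) = u (i+2) :=
        per_eq hm0 h.per (by rw [Nat.mod_mod_of_dvd _ (dvd_refl m)])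
      rw [e]; exact h2
    exact ax.Rtrans _ _ _ h1 h2' hiNe
  constructor
  case hm => exact hm'0
  case per => intro t; rw [Nat.add_mod_right]
  case inj =>
    intro s t hs ht hEq
    rw [Nat.mod_eq_of_lt hs, Nat.mod_eq_of_lt ht] at hEq
    have h1m : (s + r) % m < m := Nat.mod_lt _ hm0
    have h2m : (t + r) % m < m := Nat.mod_lt _ hm0
    have heq2 : (s + r) % m = (t + r) % m := h.inj _ _ h1m h2m hEq
    have hmod : s % m = t % m := Nat.ModEq.add_right_cancel' r heq2
    rw [Nat.mod_eq_of_lt (by omega : s < m), Nat.mod_eq_of_lt (by omega : t < m)] at hmod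
    exact hmod
  case link =>
    intro t
    rcases Nat.lt_or_ge (t % m') (m' - 1) with hc | hc
    · have e1 : (1:ℕ) % m' = 1 := Nat.mod_eq_of_lt (by omega)
      have h01 : (t+1) % m' = t % m' + 1 := by
        rw [Nat.add_mod, e1, Nat.mod_eq_of_lt (by omega)]
      rw [h01]
      have hl := h.link ((t % m' + r) % m)
      have e2 : u (((t % m' + r) % m) + 1) = u ((t % m' + 1 + r) % m) :=
        per_eq hm0 h.per (by
          rw [Nat.mod_add_mod, Nat.mod_mod_of_dvd _ (dvd_refl m),
            (by omega : t % m' + r + 1 = t % m' + 1 + r)])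
      rw [e2] at hl
      exact hl
    · have ht : t % m' = m' - 1 := by
        have := Nat.mod_lt t hm'0
        omega
      obtain ⟨e1, e2⟩ := hkey t ht
      rw [e1, e2]
      exact Or.inl hwrapR
  case exR =>
    refine ⟨m' - 1, ?_⟩
    obtain ⟨e1, e2⟩ := hkey (m' - 1) (Nat.mod_eq_of_lt (by omega))
    rw [e1, e2]
    exact hwrapR
  case exC =>
    obtain ⟨j, hj⟩ := h.exC
    have hj' : C (u (j % m)) (u (j % m + 1)) := h.edge_mod hj
    set j' := j % m with hj'def
    have hjm : j' < m := Nat.mod_lt _ hm0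
    have hne1 : j' ≠ i := by
      intro hEq; rw [hEq] at hj'; exact ax.disj _ _ h1 hj'
    have hne2 : j' ≠ (i+1) % m := by
      intro hEq
      rw [hEq] at hj'
      have e1 : u ((i+1) % m) = u (i+1) :=
        per_eq hm0 h.per (by rw [Nat.mod_mod_of_dvd _ (dvd_refl m)])
      have e2 : u ((i+1) % m + 1) = u (i+2) :=
        per_eq hm0 h.per (by rw [Nat.mod_add_mod])
      rw [e1, e2] at hj'
      exact ax.disj _ _ h2 hj'
    set s := (j' + 2*m - r) % m with hsdef
    have hsm : s < m := Nat.mod_lt _ hm0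
    have hkey2 : (s + r) % m = j' := by
      have : (j' + 2*m - r) + r = j' + 2*m := by omega
      rw [hsdef, Nat.mod_add_mod, this, (by ring : j' + 2*m = j' + m*2),
        Nat.add_mul_mod_self_left, Nat.mod_eq_of_lt hjm]
    have hsnot1 : s ≠ m - 1 := by
      intro hEq
      apply hne2
      rw [← hkey2, hEq]
      have e : m - 1 + r = (i + 1) + m := by omega
      rw [e, Nat.add_mod_right]
    have hsnot2 : s ≠ m - 2 := by
      intro hEq
      apply hne1
      rw [← hkey2, hEq]
      have e : m - 2 + r = i + m := by omega
      rw [e, Nat.add_mod_right, Nat.mod_eq_of_lt hi]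
    have hsle : s ≤ m - 3 := by omega
    refine ⟨s, ?_⟩
    have e0 : s % m' = s := Nat.mod_eq_of_lt (by omega)
    have e0' : (s+1) % m' = s + 1 := Nat.mod_eq_of_lt (by omega)
    have e1 : u ((s % m' + r) % m) = u j' := by rw [e0, hkey2]
    have e2 : u (((s+1) % m' + r) % m) = u (j' + 1) := by
      rw [e0']
      exact per_eq hm0 h.per
        (by rw [Nat.mod_mod_of_dvd _ (dvd_refl m),
                (by omega : s + 1 + r = (s + r) + 1), ← Nat.mod_add_mod, hkey2])
    rw [e1, e2]
    exact hj'

end CycleReduce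
section ReduceMain

variable {α : Type*}

lemma reduceRC {R C : α → α → Prop} (ax : RCAxioms R C) :
    ∀ m, ∀ u, CycData R C m u →
      ∃ u' : ℕ → α, (∀ t, ∃ s, u' t = u s) ∧
        (∀ t, t % 2 = 0 → R (u' t) (u' (t+1))) ∧
        (∀ t, t % 2 = 1 → C (u' t) (u' (t+1))) := by
  intro m
  induction m using Nat.strong_induction_on with
  | _ m IH =>
    intro u h
    by_cases hterm : ∃ j, (R (u j) (u (j+1)) ∧ R (u (j+1)) (u (j+2))) ∨
        (C (u j) (u (j+1)) ∧ C (u (j+1)) (u (j+2)))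
    · have hm3 : 3 ≤ m := by
        by_contra hcon
        have hm12 : m = 1 ∨ m = 2 := by have := h.hm; omega
        rcases hm12 with hm1 | hm2
        · rcases h.link 0 with hr | hcc
          · have e : u (0+1) = u 0 := by have := h.per 0; rw [hm1] at this; exact this
            rw [e] at hr; exact ax.Rirr _ hr
          · have e : u (0+1) = u 0 := by have := h.per 0; rw [hm1] at this; exact this
            rw [e] at hcc; exact ax.Cirr _ hcc
        · have key : ∀ (P : α → α → Prop), (∀ x y, P x y → P y x) →
              (∃ j, P (u j) (u (j+1))) → P (u 0) (u 1) := by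
            intro P hsymm hex
            obtain ⟨j, hj⟩ := hex
            have h2 := h.edge_mod hj
            have hcases : j % m = 0 ∨ j % m = 1 := by rw [hm2]; omega
            rcases hcases with e | e
            · rw [e] at h2; simpa using h2
            · rw [e] at h2
              have e2 : u (1+1) = u 0 := by have := h.per 0; rw [hm2] at this; exact this
              rw [e2] at h2
              exact hsymm _ _ h2
          exact ax.disj _ _ (key R ax.Rsymm h.exR) (key C ax.Csymm h.exC)
      obtain ⟨j, hj⟩ := hterm
      have hstep : ∀ (R' C' : α → α → Prop), RCAxioms R' C' → CycData R' C' m u →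
          R' (u j) (u (j+1)) → R' (u (j+1)) (u (j+2)) →
          ∃ m' u', m' < m ∧ CycData R' C' m' u' ∧ (∀ t, ∃ s, u' t = u s) := by
        intro R' C' ax' h' ha hb
        set i := j % m with hidef
        have hi : i < m := Nat.mod_lt _ h'.hm
        have h1 : R' (u i) (u (i+1)) := h'.edge_mod ha
        have h2 : R' (u (i+1)) (u (i+2)) := by
          have hmm := h'.edge_mod (j := j+1) hb
          have e1 : u ((j+1) % m) = u (i+1) := per_eq h'.hm h'.per (by
            rw [Nat.mod_mod_of_dvd _ (dvd_refl m), hidef, Nat.mod_add_mod])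
          have e2 : u ((j+1) % m + 1) = u (i+2) := per_eq h'.hm h'.per (by
            rw [Nat.mod_add_mod, hidef, Nat.mod_add_mod, (by omega : j + 1 + 1 = j + 2)])
          rw [e1, e2] at hmm
          exact hmm
        exact shrinkRC ax' h' hm3 hi h1 h2
      have next : ∃ m' u', m' < m ∧ CycData R C m' u' ∧ (∀ t, ∃ s, u' t = u s) := by
        rcases hj with ⟨ha, hb⟩ | ⟨ha, hb⟩
        · exact hstep R C ax h ha hb
        · obtain ⟨m', u', hlt, h', hsub⟩ := hstep C R ax.swap h.swap ha hb
          exact ⟨m', u', hlt, h'.swap, hsub⟩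
      obtain ⟨m', u', hlt, h', hsub⟩ := next
      obtain ⟨u'', hsub', hx, hy⟩ := IH m' hlt u' h'
      refine ⟨u'', ?_, hx, hy⟩
      intro t
      obtain ⟨s, hs⟩ := hsub' t
      obtain ⟨s', hs'⟩ := hsub s
      exact ⟨s', by rw [hs, hs']⟩
    · have hstepR : ∀ j, R (u j) (u (j+1)) → C (u (j+1)) (u (j+2)) := by
        intro j hj
        rcases h.link (j+1) with hr | hc
        · exact absurd ⟨j, Or.inl ⟨hj, hr⟩⟩ hterm
        · exact hc
      have hstepC : ∀ j, C (u j) (u (j+1)) → R (u (j+1)) (u (j+2)) := by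
        intro j hj
        rcases h.link (j+1) with hr | hc
        · exact hr
        · exact absurd ⟨j, Or.inr ⟨hj, hc⟩⟩ hterm
      rcases h.link 0 with h0 | h0
      · have main : ∀ t, (t % 2 = 0 → R (u t) (u (t+1))) ∧ (t % 2 = 1 → C (u t) (u (t+1))) := by
          intro t
          induction t with
          | zero => exact ⟨fun _ => h0, fun hc => by omega⟩
          | succ t ih =>
            by_cases hp : t % 2 = 0
            · exact ⟨fun hc => by omega, fun _ => hstepR t (ih.1 hp)⟩
            · have hp1 : t % 2 = 1 := by omega
              exact ⟨fun _ => hstepC t (ih.2 hp1), fun hc => by omega⟩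
        exact ⟨u, fun t => ⟨t, rfl⟩, fun t => (main t).1, fun t => (main t).2⟩
      · have main : ∀ t, (t % 2 = 0 → R (u (t+1)) (u (t+1+1))) ∧
            (t % 2 = 1 → C (u (t+1)) (u (t+1+1))) := by
          intro t
          induction t with
          | zero => exact ⟨fun _ => hstepC 0 h0, fun hc => by omega⟩
          | succ t ih =>
            by_cases hp : t % 2 = 0
            · exact ⟨fun hc => by omega, fun _ => hstepR (t+1) (ih.1 hp)⟩
            · have hp1 : t % 2 = 1 := by omega
              exact ⟨fun _ => hstepC (t+1) (ih.2 hp1), fun hc => by omega⟩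
        exact ⟨fun t => u (t+1), fun t => ⟨t+1, rfl⟩, fun t => (main t).1, fun t => (main t).2⟩

end ReduceMain
section ExtractCycle

private lemma walk_support_eq_map {V : Type*} {G : SimpleGraph V} {a b : V} (w : G.Walk a b) :
    w.support = (List.range (w.length + 1)).map w.getVert := by
  induction w with
  | nil => rfl
  | @cons x y z h q ih =>
    rw [SimpleGraph.Walk.support_cons, ih, SimpleGraph.Walk.length_cons]
    conv_rhs => rw [List.range_succ_eq_map]
    simp only [List.map_cons, List.map_map]
    congr 1

variable {k l : ℕ} {M : Fin k → Fin l → Option Bool}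

private lemma adj_ne {p q : Fin k × Fin l} (h : (monCellGraph M).Adj p q) :
    (M p.1 p.2).isSome ∧ (M q.1 q.2).isSome ∧
    (((p.2 = q.2 ∧ p.1 ≠ q.1)) ∨ ((p.1 = q.1 ∧ p.2 ≠ q.2))) := by
  rw [monCellGraph, SimpleGraph.fromRel_adj] at h
  obtain ⟨hne, hor⟩ := h
  rcases hor with h | h
  · obtain ⟨h1, h2, h3⟩ := h
    refine ⟨h1, h2, ?_⟩
    rcases h3 with ⟨e, ne, _⟩ | ⟨e, ne, _⟩
    · exact Or.inr ⟨e, ne⟩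
    · exact Or.inl ⟨e, ne⟩
  · obtain ⟨h1, h2, h3⟩ := h
    refine ⟨h2, h1, ?_⟩
    rcases h3 with ⟨e, ne, _⟩ | ⟨e, ne, _⟩
    · exact Or.inr ⟨e.symm, fun hc => ne hc.symm⟩
    · exact Or.inl ⟨e.symm, fun hc => ne hc.symm⟩

private lemma exists_alt_walk (hcyc : ¬ (monCellGraph M).IsAcyclic) :
    ∃ u : ℕ → Fin k × Fin l, (∀ t, (M (u t).1 (u t).2).isSome) ∧
      (∀ t, t % 2 = 0 → (u t).2 = (u (t+1)).2 ∧ (u t).1 ≠ (u (t+1)).1) ∧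
      (∀ t, t % 2 = 1 → (u t).1 = (u (t+1)).1 ∧ (u t).2 ≠ (u (t+1)).2) := by
  classical
  simp only [SimpleGraph.IsAcyclic] at hcyc
  push_neg at hcyc
  obtain ⟨v, c, hc⟩ := hcyc
  set n := c.length with hn
  have hn3 : 3 ≤ n := hc.three_le_length
  have hn0 : 0 < n := by omega
  set g : ℕ → Fin k × Fin l := fun t => c.getVert (t % n + 1) with hg
  have gmod : ∀ t, g t = g (t % n) := by
    intro t
    simp only [hg]
    rw [Nat.mod_mod_of_dvd _ (dvd_refl n)]
  have gper : ∀ t, g (t + n) = g t := by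
    intro t
    simp only [hg, Nat.add_mod_right]
  have hadj : ∀ t, (monCellGraph M).Adj (g t) (g (t+1)) := by
    intro t
    have hlt : t % n < n := Nat.mod_lt _ hn0
    rcases Nat.lt_or_ge (t % n + 1) n with hcase | hcase
    · have e : (t+1) % n = t % n + 1 := by
        rw [Nat.add_mod, Nat.mod_eq_of_lt (by omega : (1:ℕ) < n), Nat.mod_eq_of_lt (by omega)]
      simp only [hg, e]
      exact c.adj_getVert_succ hcase
    · have ht : t % n = n - 1 := by omega
      have e : (t+1) % n = 0 := by
        rw [Nat.add_mod, ht, Nat.mod_eq_of_lt (by omega : (1:ℕ) < n),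
          Nat.sub_add_cancel (by omega), Nat.mod_self]
      simp only [hg, e, ht]
      rw [Nat.sub_add_cancel (by omega : 1 ≤ n), Nat.zero_add]
      have e1 : c.getVert n = v := by rw [hn]; exact c.getVert_length
      rw [e1]
      have h9 := c.adj_getVert_succ (show 0 < c.length by omega)
      rw [SimpleGraph.Walk.getVert_zero] at h9
      exact h9
  have hinj : ∀ s t, s < n → t < n → g s = g t → s = t := by
    intro s t hs ht hEq
    have hnodup : c.support.tail.Nodup := hc.support_nodup
    have hsupp : c.support.tail = (List.range n).map (fun s => c.getVert (s + 1)) := by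
      rw [walk_support_eq_map c, ← hn, List.range_succ_eq_map]
      simp only [List.map_cons, List.tail_cons, List.map_map]
      rfl
    rw [hsupp] at hnodup
    have := List.inj_on_of_nodup_map hnodup (List.mem_range.mpr hs) (List.mem_range.mpr ht)
    apply this
    simpa only [hg, Nat.mod_eq_of_lt hs, Nat.mod_eq_of_lt ht] using hEq
  have hsome : ∀ t, (M (g t).1 (g t).2).isSome := fun t => (adj_ne (hadj t)).1
  have hlink : ∀ t, ((g t).2 = (g (t+1)).2 ∧ (g t).1 ≠ (g (t+1)).1) ∨
      ((g t).1 = (g (t+1)).1 ∧ (g t).2 ≠ (g (t+1)).2) := fun t => (adj_ne (hadj t)).2.2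
  -- both link types occur
  have hbetween_row : ∀ t, (g t).2 = (g (t+1)).2 → ∀ x : Fin k,
      (((g t).1 < x ∧ x < (g (t+1)).1) ∨ ((g (t+1)).1 < x ∧ x < (g t).1)) →
      M x (g t).2 = none := by
    intro t he x hx
    have h := hadj t
    rw [monCellGraph, SimpleGraph.fromRel_adj] at h
    obtain ⟨hne, hor⟩ := h
    rcases hor with h | h
    · rcases h.2.2 with ⟨e, ne, hemp⟩ | ⟨e, ne, hemp⟩
      · exact absurd he (by intro hc2; exact ne hc2)
      · exact hemp x hx
    · rcases h.2.2 with ⟨e, ne, hemp⟩ | ⟨e, ne, hemp⟩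
      · exact absurd he (by intro hc2; exact ne hc2.symm)
      · have := hemp x (by tauto)
        rw [e] at this
        exact this
  have hbetween_col : ∀ t, (g t).1 = (g (t+1)).1 → ∀ y : Fin l,
      (((g t).2 < y ∧ y < (g (t+1)).2) ∨ ((g (t+1)).2 < y ∧ y < (g t).2)) →
      M (g t).1 y = none := by
    intro t he y hy
    have h := hadj t
    rw [monCellGraph, SimpleGraph.fromRel_adj] at h
    obtain ⟨hne, hor⟩ := h
    rcases hor with h | h
    · rcases h.2.2 with ⟨e, ne, hemp⟩ | ⟨e, ne, hemp⟩
      · exact hemp y hy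
      · exact absurd he (by intro hc2; exact ne hc2)
    · rcases h.2.2 with ⟨e, ne, hemp⟩ | ⟨e, ne, hemp⟩
      · have := hemp y (by tauto)
        rw [e] at this
        exact this
      · exact absurd he (by intro hc2; exact ne hc2.symm)
  have hexC : ∃ j, (g j).1 = (g (j+1)).1 ∧ (g j).2 ≠ (g (j+1)).2 := by
    by_contra hnone
    push_neg at hnone
    have hall : ∀ t, (g t).2 = (g (t+1)).2 ∧ (g t).1 ≠ (g (t+1)).1 := by
      intro t
      rcases hlink t with hr | hcc
      · exact hr
      · exact absurd hcc.2 (by simpa using hnone t hcc.1)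
    obtain ⟨i₀, hi₀mem, hmax⟩ := Finset.exists_max_image (Finset.range n)
      (fun i => ((g i).1 : ℕ)) ⟨0, Finset.mem_range.mpr hn0⟩
    have hi₀ : i₀ < n := Finset.mem_range.mp hi₀mem
    set a := g (i₀ + n - 1) with ha
    set b := g (i₀ + 1) with hb
    have hprev : g (i₀ + n - 1 + 1) = g i₀ := by
      rw [(by omega : i₀ + n - 1 + 1 = i₀ + n), gper]
    have h1 := hall (i₀ + n - 1)
    rw [hprev] at h1
    have h2 := hall i₀
    have hmaxa : ((a.1 : ℕ)) < (g i₀).1 := by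
      have hmem : (i₀ + n - 1) % n < n := Nat.mod_lt _ hn0
      have := hmax ((i₀ + n - 1) % n) (Finset.mem_range.mpr hmem)
      rw [← gmod] at this
      rcases lt_or_eq_of_le this with hlt | heq
      · exact hlt
      · exact absurd (Fin.val_injective heq) h1.2
    have hmaxb : ((b.1 : ℕ)) < (g i₀).1 := by
      have hmem : (i₀ + 1) % n < n := Nat.mod_lt _ hn0
      have := hmax ((i₀ + 1) % n) (Finset.mem_range.mpr hmem)
      rw [← gmod] at this
      rcases lt_or_eq_of_le this with hlt | heq
      · exact hlt
      · exact absurd (Fin.val_injective heq).symm h2.2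
    rcases lt_trichotomy (a.1 : ℕ) (b.1 : ℕ) with hab | hab | hab
    · have := hbetween_row (i₀ + n - 1) (by rw [hprev]; exact h1.1) b.1
        (by rw [hprev]; left; exact ⟨hab, hmaxb⟩)
      have hb2 : b.2 = a.2 := by rw [h1.1, ← h2.1]
      rw [← hb2] at this
      have := hsome (i₀ + 1)
      rw [‹M b.1 b.2 = none›] at this
      simp at this
    · have haeq : a = b := by
        apply Prod.ext
        · exact Fin.val_injective hab
        · rw [h1.1, ← h2.1]
      have e1 := hinj ((i₀ + n - 1) % n) ((i₀ + 1) % n) (Nat.mod_lt _ hn0) (Nat.mod_lt _ hn0)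
        (by rw [← gmod, ← gmod]; exact haeq)
      have e2 : (i₀ + n - 1) % n = (i₀ + (n - 1)) % n := by congr 1; omega
      have e3 : (i₀ + (n-1)) % n = (i₀ % n + (n-1) % n) % n := by rw [Nat.add_mod]
      have e4 : (i₀ + 1) % n = (i₀ % n + 1 % n) % n := by rw [Nat.add_mod]
      have hi₀n : i₀ % n = i₀ := Nat.mod_eq_of_lt hi₀
      have h1n : (1:ℕ) % n = 1 := Nat.mod_eq_of_lt (by omega)
      have hn1 : (n-1) % n = n-1 := Nat.mod_eq_of_lt (by omega)
      rw [e2, e3, e4, hi₀n, h1n, hn1] at e1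
      rcases Nat.lt_or_ge (i₀ + (n-1)) n with hcc | hcc
      · rw [Nat.mod_eq_of_lt hcc] at e1
        rcases Nat.lt_or_ge (i₀ + 1) n with hdd | hdd
        · rw [Nat.mod_eq_of_lt hdd] at e1; omega
        · have : (i₀ + 1) % n = i₀ + 1 - n := by
            conv_lhs => rw [(by omega : i₀ + 1 = (i₀ + 1 - n) + n)]
            rw [Nat.add_mod_right, Nat.mod_eq_of_lt (by omega)]
          rw [this] at e1; omega
      · have : (i₀ + (n-1)) % n = i₀ + (n-1) - n := by
          conv_lhs => rw [(by omega : i₀ + (n-1) = (i₀ + (n-1) - n) + n)]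
          rw [Nat.add_mod_right, Nat.mod_eq_of_lt (by omega)]
        rw [this] at e1
        rcases Nat.lt_or_ge (i₀ + 1) n with hdd | hdd
        · rw [Nat.mod_eq_of_lt hdd] at e1; omega
        · have h5 : (i₀ + 1) % n = i₀ + 1 - n := by
            conv_lhs => rw [(by omega : i₀ + 1 = (i₀ + 1 - n) + n)]
            rw [Nat.add_mod_right, Nat.mod_eq_of_lt (by omega)]
          rw [h5] at e1; omega
    · have := hbetween_row i₀ h2.1 a.1 (by right; exact ⟨hab, hmaxa⟩)
      have ha2 : a.2 = (g i₀).2 := h1.1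
      rw [← ha2] at this
      have h6 := hsome (i₀ + n - 1)
      rw [‹M a.1 a.2 = none›] at h6
      simp at h6
  have hexR : ∃ j, (g j).2 = (g (j+1)).2 ∧ (g j).1 ≠ (g (j+1)).1 := by
    by_contra hnone
    push_neg at hnone
    have hall : ∀ t, (g t).1 = (g (t+1)).1 ∧ (g t).2 ≠ (g (t+1)).2 := by
      intro t
      rcases hlink t with hr | hcc
      · exact absurd hr.2 (by simpa using hnone t hr.1)
      · exact hcc
    obtain ⟨i₀, hi₀mem, hmax⟩ := Finset.exists_max_image (Finset.range n)
      (fun i => ((g i).2 : ℕ)) ⟨0, Finset.mem_range.mpr hn0⟩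
    have hi₀ : i₀ < n := Finset.mem_range.mp hi₀mem
    set a := g (i₀ + n - 1) with ha
    set b := g (i₀ + 1) with hb
    have hprev : g (i₀ + n - 1 + 1) = g i₀ := by
      rw [(by omega : i₀ + n - 1 + 1 = i₀ + n), gper]
    have h1 := hall (i₀ + n - 1)
    rw [hprev] at h1
    have h2 := hall i₀
    have hmaxa : ((a.2 : ℕ)) < (g i₀).2 := by
      have hmem : (i₀ + n - 1) % n < n := Nat.mod_lt _ hn0
      have := hmax ((i₀ + n - 1) % n) (Finset.mem_range.mpr hmem)
      rw [← gmod] at this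
      rcases lt_or_eq_of_le this with hlt | heq
      · exact hlt
      · exact absurd (Fin.val_injective heq) h1.2
    have hmaxb : ((b.2 : ℕ)) < (g i₀).2 := by
      have hmem : (i₀ + 1) % n < n := Nat.mod_lt _ hn0
      have := hmax ((i₀ + 1) % n) (Finset.mem_range.mpr hmem)
      rw [← gmod] at this
      rcases lt_or_eq_of_le this with hlt | heq
      · exact hlt
      · exact absurd (Fin.val_injective heq).symm h2.2
    rcases lt_trichotomy (a.2 : ℕ) (b.2 : ℕ) with hab | hab | hab
    · have := hbetween_col (i₀ + n - 1) (by rw [hprev]; exact h1.1) b.2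
        (by rw [hprev]; left; exact ⟨hab, hmaxb⟩)
      have hb2 : b.1 = a.1 := by rw [h1.1, ← h2.1]
      rw [← hb2] at this
      have h7 := hsome (i₀ + 1)
      rw [‹M b.1 b.2 = none›] at h7
      simp at h7
    · have haeq : a = b := by
        apply Prod.ext
        · rw [h1.1, ← h2.1]
        · exact Fin.val_injective hab
      have e1 := hinj ((i₀ + n - 1) % n) ((i₀ + 1) % n) (Nat.mod_lt _ hn0) (Nat.mod_lt _ hn0)
        (by rw [← gmod, ← gmod]; exact haeq)
      have e2 : (i₀ + n - 1) % n = (i₀ + (n - 1)) % n := by congr 1; omega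
      have e3 : (i₀ + (n-1)) % n = (i₀ % n + (n-1) % n) % n := by rw [Nat.add_mod]
      have e4 : (i₀ + 1) % n = (i₀ % n + 1 % n) % n := by rw [Nat.add_mod]
      have hi₀n : i₀ % n = i₀ := Nat.mod_eq_of_lt hi₀
      have h1n : (1:ℕ) % n = 1 := Nat.mod_eq_of_lt (by omega)
      have hn1 : (n-1) % n = n-1 := Nat.mod_eq_of_lt (by omega)
      rw [e2, e3, e4, hi₀n, h1n, hn1] at e1
      rcases Nat.lt_or_ge (i₀ + (n-1)) n with hcc | hcc
      · rw [Nat.mod_eq_of_lt hcc] at e1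
        rcases Nat.lt_or_ge (i₀ + 1) n with hdd | hdd
        · rw [Nat.mod_eq_of_lt hdd] at e1; omega
        · have : (i₀ + 1) % n = i₀ + 1 - n := by
            conv_lhs => rw [(by omega : i₀ + 1 = (i₀ + 1 - n) + n)]
            rw [Nat.add_mod_right, Nat.mod_eq_of_lt (by omega)]
          rw [this] at e1; omega
      · have : (i₀ + (n-1)) % n = i₀ + (n-1) - n := by
          conv_lhs => rw [(by omega : i₀ + (n-1) = (i₀ + (n-1) - n) + n)]
          rw [Nat.add_mod_right, Nat.mod_eq_of_lt (by omega)]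
        rw [this] at e1
        rcases Nat.lt_or_ge (i₀ + 1) n with hdd | hdd
        · rw [Nat.mod_eq_of_lt hdd] at e1; omega
        · have h5 : (i₀ + 1) % n = i₀ + 1 - n := by
            conv_lhs => rw [(by omega : i₀ + 1 = (i₀ + 1 - n) + n)]
            rw [Nat.add_mod_right, Nat.mod_eq_of_lt (by omega)]
          rw [h5] at e1; omega
    · have := hbetween_col i₀ h2.1 a.2 (by right; exact ⟨hab, hmaxa⟩)
      have ha2 : a.1 = (g i₀).1 := h1.1
      rw [← ha2] at this
      have h8 := hsome (i₀ + n - 1)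
      rw [‹M a.1 a.2 = none›] at h8
      simp at h8
  -- assemble CycData and reduce
  have ax : RCAxioms (fun c d : Fin k × Fin l => c.2 = d.2 ∧ c.1 ≠ d.1)
      (fun c d : Fin k × Fin l => c.1 = d.1 ∧ c.2 ≠ d.2) := by
    refine ⟨?_, ?_, ?_, ?_, ?_, ?_, ?_⟩
    · exact fun x y h => ⟨h.1.symm, fun hc => h.2 hc.symm⟩
    · exact fun x y h => ⟨h.1.symm, fun hc => h.2 hc.symm⟩
    · rintro x y ⟨h1, h2⟩ ⟨h3, h4⟩; exact h2 h3
    · rintro x ⟨h1, h2⟩; exact h2 rfl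
    · rintro x ⟨h1, h2⟩; exact h2 rfl
    · rintro x y z ⟨h1, h2⟩ ⟨h3, h4⟩ hne
      refine ⟨h1.trans h3, fun hc => hne (Prod.ext hc (h1.trans h3))⟩
    · rintro x y z ⟨h1, h2⟩ ⟨h3, h4⟩ hne
      refine ⟨h1.trans h3, fun hc => hne (Prod.ext (h1.trans h3) hc)⟩
  have hdata : CycData (fun c d : Fin k × Fin l => c.2 = d.2 ∧ c.1 ≠ d.1)
      (fun c d : Fin k × Fin l => c.1 = d.1 ∧ c.2 ≠ d.2) n g :=
    ⟨hn0, gper, hinj, hlink, hexR, hexC⟩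
  obtain ⟨u', hsub, hx, hy⟩ := reduceRC ax n g hdata
  refine ⟨u', ?_, hx, hy⟩
  intro t
  obtain ⟨s, hs⟩ := hsub t
  rw [hs]
  exact hsome s

end ExtractCycle
section Construction

variable {k l : ℕ} (M : Fin k → Fin l → Option Bool) (u : ℕ → Fin k × Fin l) (p : ℕ)

private def QQ (p : ℕ) : ℕ := 8*p+12

private def sg (t : ℕ) : Bool := (M (u t).1 (u t).2).getD false

private def ff : ℕ → Bool
  | 0 => true
  | (j+1) => (ff j == sg M u (j+1))

private def eta (s : ℕ) : ℕ := if ff M u (2*s) = true then s+1 else QQ p - 2 - s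

private def xi (s : ℕ) : ℕ := if ff M u (2*s+1) = true then s+1 else QQ p - 2 - s

private def bo (t : ℕ) : ℕ := if t = 2*p then 4*p+6 else eta M u p (t/2)

private def ao (t : ℕ) : ℕ :=
  if t = 0 then (if sg M u 0 = true then 0 else QQ p - 1) else xi M u p ((t-1)/2)

private def Xc (t : ℕ) : ℕ := QQ p * ((u t).1 : ℕ) + ao M u p t

private def Yc (t : ℕ) : ℕ := QQ p * ((u t).2 : ℕ) + bo M u p t

open Classical in
private noncomputable def Mp : Fin (QQ p * k) → Fin (QQ p * l) → Option Bool :=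
  fun x y => if (∃ t, t ≤ 2*p ∧ Xc M u p t = x.val ∧ Yc M u p t = y.val) then
    M ⟨x.val / QQ p, Nat.div_lt_of_lt_mul x.isLt⟩ ⟨y.val / QQ p, Nat.div_lt_of_lt_mul y.isLt⟩
  else none

private lemma hQpos : 0 < QQ p := by simp [QQ]

private lemma ff_succ (j : ℕ) : ff M u (j+1) = (ff M u j == sg M u (j+1)) := rfl

private lemma hsg_some (hne : ∀ t, (M (u t).1 (u t).2).isSome) (t : ℕ) :
    M (u t).1 (u t).2 = some (sg M u t) := by
  have := hne t
  cases hM : M (u t).1 (u t).2 with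
  | none => rw [hM] at this; simp at this
  | some b => simp [sg, hM]

private lemma consec (halt0 : ∀ t, t % 2 = 0 → (u t).2 = (u (t+1)).2 ∧ (u t).1 ≠ (u (t+1)).1)
    (halt1 : ∀ t, t % 2 = 1 → (u t).1 = (u (t+1)).1 ∧ (u t).2 ≠ (u (t+1)).2) (t : ℕ) :
    u t ≠ u (t+1) := by
  intro hEq
  rcases Nat.even_or_odd t with he | ho
  · exact (halt0 t (Nat.even_iff.mp he)).2 (by rw [hEq])
  · exact (halt1 t (Nat.odd_iff.mp ho)).2 (by rw [hEq])

private lemma eta_val (s : ℕ) :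
    (ff M u (2*s) = true ∧ eta M u p s = s+1) ∨
    (¬ (ff M u (2*s) = true) ∧ eta M u p s = 8*p+10 - s) := by
  by_cases hf : ff M u (2*s) = true
  · exact Or.inl ⟨hf, by rw [eta, if_pos hf]⟩
  · refine Or.inr ⟨hf, ?_⟩
    rw [eta, if_neg hf]
    simp [QQ]

private lemma xi_val (s : ℕ) :
    (ff M u (2*s+1) = true ∧ xi M u p s = s+1) ∨
    (¬ (ff M u (2*s+1) = true) ∧ xi M u p s = 8*p+10 - s) := by
  by_cases hf : ff M u (2*s+1) = true
  · exact Or.inl ⟨hf, by rw [xi, if_pos hf]⟩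
  · refine Or.inr ⟨hf, ?_⟩
    rw [xi, if_neg hf]
    simp [QQ]

private lemma claimB {t1 t2 : ℕ} (h12 : t1 + 2 ≤ t2) (h2 : t2 ≤ 2*p) :
    ((bo M u p t1 < bo M u p t2) ↔ ff M u (2*(t1/2)) = true) ∧ bo M u p t1 ≠ bo M u p t2 := by
  have hs1 : t1/2 + 1 ≤ p := by omega
  have hs2 : t2/2 ≤ p := by omega
  have hslt : t1/2 < t2/2 := by omega
  have hb1 : bo M u p t1 = eta M u p (t1/2) := by rw [bo, if_neg (by omega)]
  rcases eta_val M u p (t1/2) with ⟨hf1, he1⟩ | ⟨hf1, he1⟩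
  · by_cases h2e : t2 = 2*p
    · rw [hb1, he1, bo, if_pos h2e]
      exact ⟨⟨fun _ => hf1, fun _ => by omega⟩, by omega⟩
    · have hb2 : bo M u p t2 = eta M u p (t2/2) := by rw [bo, if_neg h2e]
      rcases eta_val M u p (t2/2) with ⟨hf2, he2⟩ | ⟨hf2, he2⟩ <;>
        rw [hb1, he1, hb2, he2] <;>
        exact ⟨⟨fun _ => hf1, fun _ => by omega⟩, by omega⟩
  · by_cases h2e : t2 = 2*p
    · rw [hb1, he1, bo, if_pos h2e]
      have hnl : ¬ (8*p+10 - t1/2 < 4*p+6) := by omega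
      exact ⟨⟨fun h => absurd h hnl, fun h => absurd h hf1⟩, by omega⟩
    · have hb2 : bo M u p t2 = eta M u p (t2/2) := by rw [bo, if_neg h2e]
      rcases eta_val M u p (t2/2) with ⟨hf2, he2⟩ | ⟨hf2, he2⟩ <;>
        rw [hb1, he1, hb2, he2] <;>
        refine ⟨⟨fun h => absurd h (by omega), fun h => absurd h hf1⟩, by omega⟩

private lemma claimA {t1 t2 : ℕ} (h1 : 1 ≤ t1) (h12 : t1 + 2 ≤ t2) (h2 : t2 ≤ 2*p) :
    ((ao M u p t1 < ao M u p t2) ↔ ff M u (2*((t1-1)/2)+1) = true) ∧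
      ao M u p t1 ≠ ao M u p t2 := by
  have hs1 : (t1-1)/2 + 1 ≤ p := by omega
  have hs2 : (t2-1)/2 ≤ p := by omega
  have hslt : (t1-1)/2 < (t2-1)/2 := by omega
  have ha1 : ao M u p t1 = xi M u p ((t1-1)/2) := by rw [ao, if_neg (by omega)]
  have ha2 : ao M u p t2 = xi M u p ((t2-1)/2) := by rw [ao, if_neg (by omega)]
  rcases xi_val M u p ((t1-1)/2) with ⟨hf1, he1⟩ | ⟨hf1, he1⟩
  · rcases xi_val M u p ((t2-1)/2) with ⟨hf2, he2⟩ | ⟨hf2, he2⟩ <;>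
      rw [ha1, he1, ha2, he2] <;>
      exact ⟨⟨fun _ => hf1, fun _ => by omega⟩, by omega⟩
  · rcases xi_val M u p ((t2-1)/2) with ⟨hf2, he2⟩ | ⟨hf2, he2⟩ <;>
      rw [ha1, he1, ha2, he2] <;>
      exact ⟨⟨fun h => absurd h (by omega), fun h => absurd h hf1⟩, by omega⟩

private lemma claimA0 {t2 : ℕ} (h1 : 2 ≤ t2) (h2 : t2 ≤ 2*p) :
    ((ao M u p 0 < ao M u p t2) ↔ sg M u 0 = true) ∧ ao M u p 0 ≠ ao M u p t2 := by
  have hs2 : (t2-1)/2 ≤ p := by omega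
  have ha2 : ao M u p t2 = xi M u p ((t2-1)/2) := by rw [ao, if_neg (by omega)]
  have ha0 : ao M u p 0 = if sg M u 0 = true then 0 else QQ p - 1 := by rw [ao, if_pos rfl]
  by_cases hs : sg M u 0 = true
  · rw [ha0, if_pos hs, ha2]
    rcases xi_val M u p ((t2-1)/2) with ⟨hf2, he2⟩ | ⟨hf2, he2⟩ <;> rw [he2] <;>
      exact ⟨⟨fun _ => hs, fun _ => by omega⟩, by omega⟩
  · rw [ha0, if_neg hs, ha2]
    simp only [QQ]
    rcases xi_val M u p ((t2-1)/2) with ⟨hf2, he2⟩ | ⟨hf2, he2⟩ <;> rw [he2] <;>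
      exact ⟨⟨fun h => absurd h (by omega), fun h => absurd h hs⟩, by omega⟩

private lemma beq_beq (a b : Bool) : ((a == b) == b) = a := by cases a <;> cases b <;> rfl

private lemma chainlem {t : ℕ} (h1 : 1 ≤ t) :
    ff M u (2*((t-1)/2)+1) = (ff M u (2*(t/2)) == sg M u t) := by
  obtain ⟨j, rfl⟩ : ∃ j, t = j + 1 := ⟨t - 1, by omega⟩
  rcases Nat.even_or_odd j with he | ho
  · -- t odd
    have e1 : 2*(((j+1)-1)/2)+1 = j + 1 := by
      obtain ⟨c, rfl⟩ := he; omega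
    have e2 : 2*((j+1)/2) = j := by
      obtain ⟨c, rfl⟩ := he; omega
    rw [e1, e2, ff_succ]
  · -- t even
    have e1 : 2*(((j+1)-1)/2)+1 = j := by
      obtain ⟨c, hc⟩ := ho; omega
    have e2 : 2*((j+1)/2) = j+1 := by
      obtain ⟨c, hc⟩ := ho; omega
    rw [e1, e2, ff_succ, beq_beq]

private lemma sg_congr {t1 t2 : ℕ} (hEq : u t1 = u t2) : sg M u t1 = sg M u t2 := by
  simp only [sg, hEq]

private lemma claimMain (halt0 : ∀ t, t % 2 = 0 → (u t).2 = (u (t+1)).2 ∧ (u t).1 ≠ (u (t+1)).1)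
    (halt1 : ∀ t, t % 2 = 1 → (u t).1 = (u (t+1)).1 ∧ (u t).2 ≠ (u (t+1)).2)
    {t1 t2 : ℕ} (hlt : t1 < t2) (h2 : t2 ≤ 2*p) (hEq : u t1 = u t2) :
    ao M u p t1 ≠ ao M u p t2 ∧ bo M u p t1 ≠ bo M u p t2 ∧
    ((ao M u p t1 < ao M u p t2) ↔
      (if sg M u t1 = true then bo M u p t1 < bo M u p t2 else bo M u p t2 < bo M u p t1)) := by
  have h12 : t1 + 2 ≤ t2 := by
    rcases Nat.lt_or_ge (t1 + 2) (t2 + 1) with h | h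
    · omega
    · have ht : t2 = t1 + 1 := by omega
      rw [ht] at hEq
      exact absurd hEq (consec u halt0 halt1 t1)
  obtain ⟨hBiff, hBne⟩ := claimB M u p h12 h2
  rcases Nat.eq_zero_or_pos t1 with h10 | h10
  · subst h10
    obtain ⟨hAiff, hAne⟩ := claimA0 M u p (by omega) h2
    refine ⟨hAne, hBne, ?_⟩
    have hf0 : ff M u (2*(0/2)) = true := by
      have e : 2*(0/2) = 0 := by norm_num
      rw [e]
      rfl
    by_cases hs : sg M u 0 = true
    · rw [if_pos hs]
      constructor
      · intro _; exact hBiff.mpr hf0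
      · intro _; exact hAiff.mpr hs
    · rw [if_neg hs]
      have hb12 : bo M u p 0 < bo M u p t2 := hBiff.mpr hf0
      constructor
      · intro h; exact absurd (hAiff.mp h) hs
      · intro h; omega
  · obtain ⟨hAiff, hAne⟩ := claimA M u p h10 h12 h2
    refine ⟨hAne, hBne, ?_⟩
    rw [hAiff, chainlem M u (by omega)]
    rcases Bool.eq_false_or_eq_true (ff M u (2*(t1/2))) with hB | hB
    · have hlt2 : bo M u p t1 < bo M u p t2 := hBiff.mpr hB
      rcases Bool.eq_false_or_eq_true (sg M u t1) with hS | hS <;>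
        (rw [hB, hS]; simp; try omega)
    · have hnlt : ¬ (bo M u p t1 < bo M u p t2) := by
        intro h
        have h2' := hBiff.mp h
        rw [hB] at h2'
        exact Bool.noConfusion h2'
      rcases Bool.eq_false_or_eq_true (sg M u t1) with hS | hS <;>
        (rw [hB, hS]; simp; try omega)

end Construction
section Construction2

variable {k l : ℕ} (M : Fin k → Fin l → Option Bool) (u : ℕ → Fin k × Fin l) (p : ℕ)

private lemma addQ_inj {c1 c2 r1 r2 : ℕ} (h : QQ p * c1 + r1 = QQ p * c2 + r2)
    (h1 : r1 < QQ p) (h2 : r2 < QQ p) : c1 = c2 ∧ r1 = r2 := by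
  have hQ : 0 < QQ p := hQpos p
  have e1 : (QQ p * c1 + r1) / QQ p = c1 := by
    rw [Nat.mul_add_div hQ, Nat.div_eq_of_lt h1]
    omega
  have e2 : (QQ p * c2 + r2) / QQ p = c2 := by
    rw [Nat.mul_add_div hQ, Nat.div_eq_of_lt h2]
    omega
  have hc : c1 = c2 := by rw [← e1, ← e2, h]
  subst hc
  exact ⟨rfl, by omega⟩

private lemma bo_lt {t : ℕ} (ht : t ≤ 2*p) : bo M u p t < QQ p := by
  by_cases h2e : t = 2*p
  · rw [bo, if_pos h2e]; simp [QQ]; omega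
  · rw [bo, if_neg h2e]
    have hs : t/2 ≤ p := by omega
    rcases eta_val M u p (t/2) with ⟨_, he⟩ | ⟨_, he⟩ <;> rw [he] <;> simp [QQ] <;> omega

private lemma ao_lt {t : ℕ} (ht : t ≤ 2*p) : ao M u p t < QQ p := by
  by_cases h0 : t = 0
  · rw [h0, ao, if_pos rfl]
    by_cases hs : sg M u 0 = true
    · rw [if_pos hs]; exact hQpos p
    · rw [if_neg hs]; have := hQpos p; omega
  · rw [ao, if_neg h0]
    have hs : (t-1)/2 ≤ p := by omega
    rcases xi_val M u p ((t-1)/2) with ⟨_, he⟩ | ⟨_, he⟩ <;> rw [he] <;> simp [QQ] <;> omega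

private lemma rowUnique {t1 t2 : ℕ} (h1 : t1 ≤ 2*p) (h2 : t2 ≤ 2*p)
    (hY : Yc M u p t1 = Yc M u p t2) :
    ((u t1).2 : ℕ) = ((u t2).2 : ℕ) ∧ (t1 = t2 ∨ t1/2 = t2/2) := by
  obtain ⟨hcoarse, hbo⟩ := addQ_inj p hY (bo_lt M u p h1) (bo_lt M u p h2)
  refine ⟨hcoarse, ?_⟩
  by_cases e1 : t1 = 2*p <;> by_cases e2 : t2 = 2*p
  · left; omega
  · exfalso
    rw [bo, if_pos e1, bo, if_neg e2] at hbo
    have hs : t2/2 + 1 ≤ p := by omega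
    rcases eta_val M u p (t2/2) with ⟨_, he⟩ | ⟨_, he⟩ <;> rw [he] at hbo <;> omega
  · exfalso
    rw [bo, if_neg e1, bo, if_pos e2] at hbo
    have hs : t1/2 + 1 ≤ p := by omega
    rcases eta_val M u p (t1/2) with ⟨_, he⟩ | ⟨_, he⟩ <;> rw [he] at hbo <;> omega
  · right
    rw [bo, if_neg e1, bo, if_neg e2] at hbo
    have hs1 : t1/2 + 1 ≤ p := by omega
    have hs2 : t2/2 + 1 ≤ p := by omega
    rcases eta_val M u p (t1/2) with ⟨_, he⟩ | ⟨_, he⟩ <;>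
      rcases eta_val M u p (t2/2) with ⟨_, he'⟩ | ⟨_, he'⟩ <;>
      rw [he, he'] at hbo <;> omega

private lemma colUnique {t1 t2 : ℕ} (h1 : t1 ≤ 2*p) (h2 : t2 ≤ 2*p)
    (hX : Xc M u p t1 = Xc M u p t2) :
    ((u t1).1 : ℕ) = ((u t2).1 : ℕ) ∧
      (t1 = t2 ∨ ((t1-1)/2 = (t2-1)/2 ∧ 1 ≤ t1 ∧ 1 ≤ t2)) := by
  obtain ⟨hcoarse, hao⟩ := addQ_inj p hX (ao_lt M u p h1) (ao_lt M u p h2)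
  refine ⟨hcoarse, ?_⟩
  by_cases e1 : t1 = 0 <;> by_cases e2 : t2 = 0
  · left; omega
  · exfalso
    rw [e1, ao, if_pos rfl, ao, if_neg e2] at hao
    have hs : (t2-1)/2 ≤ p := by omega
    rcases xi_val M u p ((t2-1)/2) with ⟨_, he⟩ | ⟨_, he⟩ <;> rw [he] at hao <;>
      by_cases hsg0 : sg M u 0 = true <;>
      simp [hsg0, QQ] at hao <;> omega
  · exfalso
    rw [e2, ao, if_neg e1, ao, if_pos rfl] at hao
    have hs : (t1-1)/2 ≤ p := by omega
    rcases xi_val M u p ((t1-1)/2) with ⟨_, he⟩ | ⟨_, he⟩ <;> rw [he] at hao <;>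
      by_cases hsg0 : sg M u 0 = true <;>
      simp [hsg0, QQ] at hao <;> omega
  · right
    rw [ao, if_neg e1, ao, if_neg e2] at hao
    have hs1 : (t1-1)/2 ≤ p := by omega
    have hs2 : (t2-1)/2 ≤ p := by omega
    rcases xi_val M u p ((t1-1)/2) with ⟨_, he⟩ | ⟨_, he⟩ <;>
      rcases xi_val M u p ((t2-1)/2) with ⟨_, he'⟩ | ⟨_, he'⟩ <;>
      rw [he, he'] at hao <;> omega

private lemma Mp_some {x : Fin (QQ p * k)} {y : Fin (QQ p * l)}
    (h : (Mp M u p x y).isSome) :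
    ∃ t, t ≤ 2*p ∧ Xc M u p t = x.val ∧ Yc M u p t = y.val := by
  by_contra hc
  simp only [Mp] at h
  rw [if_neg hc] at h
  simp at h

private lemma Mp_eq {x : Fin (QQ p * k)} {y : Fin (QQ p * l)}
    (h : ∃ t, t ≤ 2*p ∧ Xc M u p t = x.val ∧ Yc M u p t = y.val) :
    Mp M u p x y = M ⟨x.val / QQ p, Nat.div_lt_of_lt_mul x.isLt⟩
      ⟨y.val / QQ p, Nat.div_lt_of_lt_mul y.isLt⟩ := by
  simp only [Mp]
  rw [if_pos h]

private lemma Xc_div {t : ℕ} (ht : t ≤ 2*p) : Xc M u p t / QQ p = ((u t).1 : ℕ) := by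
  rw [Xc, Nat.mul_add_div (hQpos p), Nat.div_eq_of_lt (ao_lt M u p ht)]
  omega

private lemma Yc_div {t : ℕ} (ht : t ≤ 2*p) : Yc M u p t / QQ p = ((u t).2 : ℕ) := by
  rw [Yc, Nat.mul_add_div (hQpos p), Nat.div_eq_of_lt (bo_lt M u p ht)]
  omega

private lemma Xc_lt {t : ℕ} (ht : t ≤ 2*p) : Xc M u p t < QQ p * k := by
  have h1 := ao_lt M u p ht
  have h2 : ((u t).1 : ℕ) + 1 ≤ k := (u t).1.isLt
  have h3 := Nat.mul_le_mul_left (QQ p) h2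
  rw [Nat.mul_add, Nat.mul_one] at h3
  rw [Xc]
  omega

private lemma Yc_lt {t : ℕ} (ht : t ≤ 2*p) : Yc M u p t < QQ p * l := by
  have h1 := bo_lt M u p ht
  have h2 : ((u t).2 : ℕ) + 1 ≤ l := (u t).2.isLt
  have h3 := Nat.mul_le_mul_left (QQ p) h2
  rw [Nat.mul_add, Nat.mul_one] at h3
  rw [Yc]
  omega

private def Vv (hk : 0 < QQ p * k) (hl : 0 < QQ p * l) (t : ℕ) :
    Fin (QQ p * k) × Fin (QQ p * l) :=
  (⟨Xc M u p t % (QQ p * k), Nat.mod_lt _ hk⟩, ⟨Yc M u p t % (QQ p * l), Nat.mod_lt _ hl⟩)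

private lemma Vv_val {hk hl} {t : ℕ} (ht : t ≤ 2*p) :
    ((Vv M u p hk hl t).1.val = Xc M u p t) ∧ ((Vv M u p hk hl t).2.val = Yc M u p t) := by
  constructor
  · exact Nat.mod_eq_of_lt (Xc_lt M u p ht)
  · exact Nat.mod_eq_of_lt (Yc_lt M u p ht)

private lemma Vv_some (hne : ∀ t, (M (u t).1 (u t).2).isSome) {hk hl} {t : ℕ} (ht : t ≤ 2*p) :
    (Mp M u p (Vv M u p hk hl t).1 (Vv M u p hk hl t).2).isSome := by
  obtain ⟨hx, hy⟩ := Vv_val M u p (hk := hk) (hl := hl) ht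
  rw [Mp_eq M u p ⟨t, ht, hx.symm, hy.symm⟩]
  have e1 : (⟨(Vv M u p hk hl t).1.val / QQ p, Nat.div_lt_of_lt_mul (Vv M u p hk hl t).1.isLt⟩ : Fin k) = (u t).1 := by
    apply Fin.ext
    simp only [hx]
    exact Xc_div M u p ht
  have e2 : (⟨(Vv M u p hk hl t).2.val / QQ p, Nat.div_lt_of_lt_mul (Vv M u p hk hl t).2.isLt⟩ : Fin l) = (u t).2 := by
    apply Fin.ext
    simp only [hy]
    exact Yc_div M u p ht
  rw [e1, e2]
  exact hne t

private lemma grid_sub (hne : ∀ t, (M (u t).1 (u t).2).isSome)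
    (halt0 : ∀ t, t % 2 = 0 → (u t).2 = (u (t+1)).2 ∧ (u t).1 ≠ (u (t+1)).1)
    (halt1 : ∀ t, t % 2 = 1 → (u t).1 = (u (t+1)).1 ∧ (u t).2 ≠ (u (t+1)).2) :
    ∀ (n : ℕ) (π : Equiv.Perm (Fin n)), MonGriddable (Mp M u p) π → MonGriddable M π := by
  intro n π hg
  obtain ⟨c', r', hcm, hrm, hsome, hsign⟩ := hg
  refine ⟨fun i => ⟨(c' i).val / QQ p, Nat.div_lt_of_lt_mul (c' i).isLt⟩,
          fun i => ⟨(r' i).val / QQ p, Nat.div_lt_of_lt_mul (r' i).isLt⟩, ?_, ?_, ?_, ?_⟩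
  · intro i j hij
    exact Nat.div_le_div_right (hcm hij)
  · intro i j hij
    exact Nat.div_le_div_right (hrm hij)
  · intro i
    obtain ⟨t, ht, hx, hy⟩ := Mp_some M u p (hsome i)
    have := hsome i
    rw [Mp_eq M u p ⟨t, ht, hx, hy⟩] at this
    exact this
  · intro i j hij hcc hrr b hMb
    obtain ⟨t1, ht1, hx1, hy1⟩ := Mp_some M u p (hsome i)
    obtain ⟨t2, ht2, hx2, hy2⟩ := Mp_some M u p (hsome j)
    have hccv : (c' i).val / QQ p = (c' j).val / QQ p := congrArg Fin.val hcc
    have hrrv : (r' (π i)).val / QQ p = (r' (π j)).val / QQ p := congrArg Fin.val hrr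
    have hu1c : ((u t1).1 : ℕ) = (c' i).val / QQ p := by rw [← Xc_div M u p ht1, hx1]
    have hu2c : ((u t2).1 : ℕ) = (c' j).val / QQ p := by rw [← Xc_div M u p ht2, hx2]
    have hu1r : ((u t1).2 : ℕ) = (r' (π i)).val / QQ p := by rw [← Yc_div M u p ht1, hy1]
    have hu2r : ((u t2).2 : ℕ) = (r' (π j)).val / QQ p := by rw [← Yc_div M u p ht2, hy2]
    have huu : u t1 = u t2 := by
      apply Prod.ext
      · apply Fin.ext; rw [hu1c, hu2c, hccv]
      · apply Fin.ext; rw [hu1r, hu2r, hrrv]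
    have hsgb : sg M u t1 = b := by
      have h1 := hsg_some M u hne t1
      have e1 : (u t1).1 = (⟨(c' i).val / QQ p, Nat.div_lt_of_lt_mul (c' i).isLt⟩ : Fin k) :=
        Fin.ext hu1c
      have e2 : (u t1).2 = (⟨(r' (π i)).val / QQ p, Nat.div_lt_of_lt_mul (r' (π i)).isLt⟩ : Fin l) :=
        Fin.ext hu1r
      rw [e1, e2, hMb] at h1
      exact (Option.some_inj.mp h1).symm
    by_cases ht12 : t1 = t2
    · subst ht12
      have hce : c' i = c' j := by
        apply Fin.ext; rw [← hx1, ← hx2]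
      have hre : r' (π i) = r' (π j) := by
        apply Fin.ext; rw [← hy1, ← hy2]
      apply hsign i j hij hce hre b
      rw [Mp_eq M u p ⟨t1, ht1, hx1, hy1⟩]
      exact hMb
    · have hxle : (c' i).val ≤ (c' j).val := hcm hij.le
      by_cases hxeq : (c' i).val = (c' j).val
      · exfalso
        have hXe : Xc M u p t1 = Xc M u p t2 := by rw [hx1, hx2, hxeq]
        obtain ⟨_, hcol⟩ := colUnique M u p ht1 ht2 hXe
        rcases hcol with he | ⟨hp2, hp3, hp4⟩
        · exact ht12 he
        · have : t2 = t1 + 1 ∨ t1 = t2 + 1 := by omega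
          rcases this with hc2 | hc2
          · rw [hc2] at huu
            exact consec u halt0 halt1 t1 huu
          · rw [hc2] at huu
            exact consec u halt0 halt1 t2 huu.symm
      · have hxlt : (c' i).val < (c' j).val := lt_of_le_of_ne hxle hxeq
        have hcveq : ((u t1).1 : ℕ) = ((u t2).1 : ℕ) := by rw [hu1c, hu2c, hccv]
        have haolt : ao M u p t1 < ao M u p t2 := by
          have e1 : QQ p * ((u t1).1 : ℕ) + ao M u p t1 = (c' i).val := hx1
          have e2 : QQ p * ((u t2).1 : ℕ) + ao M u p t2 = (c' j).val := hx2
          rw [← hcveq] at e2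
          omega
        have hrveq : ((u t1).2 : ℕ) = ((u t2).2 : ℕ) := by rw [hu1r, hu2r, hrrv]
        have hYlt : bo M u p t1 < bo M u p t2 → (r' (π i)).val < (r' (π j)).val := by
          intro hb
          have e1 : QQ p * ((u t1).2 : ℕ) + bo M u p t1 = (r' (π i)).val := hy1
          have e2 : QQ p * ((u t2).2 : ℕ) + bo M u p t2 = (r' (π j)).val := hy2
          rw [← hrveq] at e2
          omega
        have hYlt' : bo M u p t2 < bo M u p t1 → (r' (π j)).val < (r' (π i)).val := by
          intro hb
          have e1 : QQ p * ((u t1).2 : ℕ) + bo M u p t1 = (r' (π i)).val := hy1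
          have e2 : QQ p * ((u t2).2 : ℕ) + bo M u p t2 = (r' (π j)).val := hy2
          rw [← hrveq] at e2
          omega
        have hfwd : (r' (π i)).val < (r' (π j)).val → π i < π j := by
          intro hv
          by_contra hno
          push_neg at hno
          have := hrm hno
          have : (r' (π j)).val ≤ (r' (π i)).val := this
          omega
        have hbwd : (r' (π j)).val < (r' (π i)).val → π j < π i := by
          intro hv
          by_contra hno
          push_neg at hno
          have := hrm hno
          have : (r' (π i)).val ≤ (r' (π j)).val := this
          omega
        rcases Nat.lt_or_ge t1 t2 with ho | ho
        · obtain ⟨_, _, hiff⟩ := claimMain M u p halt0 halt1 ho ht2 huu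
          rcases Bool.eq_false_or_eq_true b with hb | hb
          · rw [hb]
            rw [if_pos rfl]
            apply hfwd
            apply hYlt
            have := hiff.mp haolt
            rw [hsgb, hb] at this
            simpa using this
          · rw [hb]
            rw [if_neg Bool.false_ne_true]
            apply hbwd
            apply hYlt'
            have := hiff.mp haolt
            rw [hsgb, hb] at this
            simpa using this
        · have ho' : t2 < t1 := by omega
          obtain ⟨hane, hbne, hiff⟩ := claimMain M u p halt0 halt1 ho' ht1 huu.symm
          have hsg2 : sg M u t2 = b := by rw [sg_congr M u huu.symm]; exact hsgb
          have hnao : ¬ (ao M u p t2 < ao M u p t1) := by omega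
          rcases Bool.eq_false_or_eq_true b with hb | hb
          · rw [hb]
            rw [if_pos rfl]
            apply hfwd
            apply hYlt
            rw [hsg2, hb] at hiff
            rw [if_pos rfl] at hiff
            have := (not_iff_not.mpr hiff).mp hnao
            omega
          · rw [hb]
            rw [if_neg Bool.false_ne_true]
            apply hbwd
            apply hYlt'
            rw [hsg2, hb] at hiff
            rw [if_neg Bool.false_ne_true] at hiff
            have := (not_iff_not.mpr hiff).mp hnao
            omega

end Construction2
section Construction3

variable {k l : ℕ} (M : Fin k → Fin l → Option Bool) (u : ℕ → Fin k × Fin l) (p : ℕ)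

private lemma adjStep {hk : 0 < QQ p * k} {hl : 0 < QQ p * l}
    (hne : ∀ t, (M (u t).1 (u t).2).isSome)
    (halt0 : ∀ t, t % 2 = 0 → (u t).2 = (u (t+1)).2 ∧ (u t).1 ≠ (u (t+1)).1)
    (halt1 : ∀ t, t % 2 = 1 → (u t).1 = (u (t+1)).1 ∧ (u t).2 ≠ (u (t+1)).2)
    {t : ℕ} (ht : t + 1 ≤ 2*p) :
    (monCellGraph (Mp M u p)).Adj (Vv M u p hk hl t) (Vv M u p hk hl (t+1)) := by
  obtain ⟨hx1, hy1⟩ := Vv_val M u p (hk := hk) (hl := hl) (t := t) (by omega)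
  obtain ⟨hx2, hy2⟩ := Vv_val M u p (hk := hk) (hl := hl) (t := t+1) ht
  have hsome1 := Vv_some M u p hne (hk := hk) (hl := hl) (t := t) (by omega)
  have hsome2 := Vv_some M u p hne (hk := hk) (hl := hl) (t := t+1) ht
  rw [monCellGraph, SimpleGraph.fromRel_adj]
  by_cases hpar : t % 2 = 0
  · obtain ⟨hrw, hcl⟩ := halt0 t hpar
    have hbo : bo M u p t = bo M u p (t+1) := by
      have h1 : t ≠ 2*p := by omega
      have h2 : t + 1 ≠ 2*p := by omega
      rw [bo, if_neg h1, bo, if_neg h2, (by omega : (t+1)/2 = t/2)]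
    have hYeq : Yc M u p t = Yc M u p (t+1) := by
      rw [Yc, Yc, hrw, hbo]
    have hXne : Xc M u p t ≠ Xc M u p (t+1) := by
      intro hEq
      exact hcl (Fin.ext ((addQ_inj p hEq (ao_lt M u p (by omega)) (ao_lt M u p ht)).1))
    refine ⟨?_, Or.inl ⟨hsome1, hsome2, Or.inr ⟨?_, ?_, ?_⟩⟩⟩
    · intro hEq
      exact hXne (by rw [← hx1, ← hx2, hEq])
    · apply Fin.ext; rw [hy1, hy2, hYeq]
    · intro hEq
      exact hXne (by rw [← hx1, ← hx2, hEq])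
    · intro i hi
      by_contra hcon
      have hsome' := Option.ne_none_iff_isSome.mp hcon
      obtain ⟨t', ht', hxe, hye⟩ := Mp_some M u p hsome'
      have hYe : Yc M u p t' = Yc M u p t := by rw [hye, hy1]
      obtain ⟨_, hrow⟩ := rowUnique M u p ht' (by omega) hYe
      have hcases : t' = t ∨ t' = t + 1 := by omega
      have hiv : (i : ℕ) = Xc M u p t ∨ (i : ℕ) = Xc M u p (t+1) := by
        rcases hcases with h' | h'
        · left; rw [← hxe, h']
        · right; rw [← hxe, h']
      have hbet : (Xc M u p t < (i:ℕ) ∧ (i:ℕ) < Xc M u p (t+1)) ∨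
          (Xc M u p (t+1) < (i:ℕ) ∧ (i:ℕ) < Xc M u p t) := by
        rcases hi with ⟨ha, hb⟩ | ⟨ha, hb⟩
        · left; exact ⟨by rw [← hx1]; exact ha, by rw [← hx2]; exact hb⟩
        · right; exact ⟨by rw [← hx2]; exact ha, by rw [← hx1]; exact hb⟩
      omega
  · have hpar1 : t % 2 = 1 := by omega
    obtain ⟨hcw, hrl⟩ := halt1 t hpar1
    have hao : ao M u p t = ao M u p (t+1) := by
      have h1 : t ≠ 0 := by omega
      have h2 : t + 1 ≠ 0 := by omega
      rw [ao, if_neg h1, ao, if_neg h2, (by omega : (t+1-1)/2 = (t-1)/2)]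
    have hXeq : Xc M u p t = Xc M u p (t+1) := by
      rw [Xc, Xc, hcw, hao]
    have hYne : Yc M u p t ≠ Yc M u p (t+1) := by
      intro hEq
      exact hrl (Fin.ext ((addQ_inj p hEq (bo_lt M u p (by omega)) (bo_lt M u p ht)).1))
    refine ⟨?_, Or.inl ⟨hsome1, hsome2, Or.inl ⟨?_, ?_, ?_⟩⟩⟩
    · intro hEq
      exact hYne (by rw [← hy1, ← hy2, hEq])
    · apply Fin.ext; rw [hx1, hx2, hXeq]
    · intro hEq
      exact hYne (by rw [← hy1, ← hy2, hEq])
    · intro j hj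
      by_contra hcon
      have hsome' := Option.ne_none_iff_isSome.mp hcon
      obtain ⟨t', ht', hxe, hye⟩ := Mp_some M u p hsome'
      have hXe : Xc M u p t' = Xc M u p t := by rw [hxe, hx1]
      obtain ⟨_, hcol⟩ := colUnique M u p ht' (by omega) hXe
      have hcases : t' = t ∨ t' = t + 1 := by omega
      have hjv : (j : ℕ) = Yc M u p t ∨ (j : ℕ) = Yc M u p (t+1) := by
        rcases hcases with h' | h'
        · left; rw [← hye, h']
        · right; rw [← hye, h']
      have hbet : (Yc M u p t < (j:ℕ) ∧ (j:ℕ) < Yc M u p (t+1)) ∨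
          (Yc M u p (t+1) < (j:ℕ) ∧ (j:ℕ) < Yc M u p t) := by
        rcases hj with ⟨ha, hb⟩ | ⟨ha, hb⟩
        · left; exact ⟨by rw [← hy1]; exact ha, by rw [← hy2]; exact hb⟩
        · right; exact ⟨by rw [← hy2]; exact ha, by rw [← hy1]; exact hb⟩
      omega

private lemma build_walk {β : Type*} (G : SimpleGraph β) :
    ∀ (n : ℕ) (f : ℕ → β), (∀ t, t < n → G.Adj (f t) (f (t+1))) →
      ∃ w : G.Walk (f 0) (f n), w.length = n ∧
        w.support = (List.range (n+1)).map f ∧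
        w.edges = (List.range n).map (fun t => s(f t, f (t+1))) := by
  intro n
  induction n with
  | zero =>
    intro f _
    exact ⟨SimpleGraph.Walk.nil, rfl, rfl, rfl⟩
  | succ n ih =>
    intro f hadj
    obtain ⟨w', hlen, hsup, hedg⟩ := ih (fun t => f (t+1)) (fun t ht => hadj (t+1) (by omega))
    refine ⟨SimpleGraph.Walk.cons (hadj 0 (by omega)) w', ?_, ?_, ?_⟩
    · simp [SimpleGraph.Walk.length_cons, hlen]
    · rw [SimpleGraph.Walk.support_cons, hsup]
      conv_rhs => rw [List.range_succ_eq_map]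
      simp only [List.map_cons, List.map_map]
      congr 1
    · rw [SimpleGraph.Walk.edges_cons, hedg]
      conv_rhs => rw [List.range_succ_eq_map]
      simp only [List.map_cons, List.map_map]
      congr 1

private lemma infix_triple {γ : Type*} (f : ℕ → γ) (N : ℕ) (a b c : γ)
    (h : [a, b, c] <:+: (List.range N).map f) :
    ∃ i, i + 2 < N ∧ a = f i ∧ b = f (i+1) ∧ c = f (i+2) := by
  obtain ⟨s, t', hst⟩ := h
  have hlen : s.length + (3 + t'.length) = N := by
    have h2 := congrArg List.length hst
    simp at h2
    omega
  have key : ∀ j, j < 3 → ([a,b,c] ++ t')[j]? = some (f (s.length + j)) := by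
    intro j hj
    have h1 : (s ++ ([a,b,c] ++ t'))[s.length + j]? = ([a,b,c] ++ t')[j]? := by
      rw [List.getElem?_append_right (by omega)]
      congr 1
      omega
    rw [List.append_assoc] at hst
    rw [hst] at h1
    rw [← h1, List.getElem?_map, List.getElem?_range (by omega)]
    rfl
  refine ⟨s.length, by omega, ?_, ?_, ?_⟩
  · have := key 0 (by omega)
    simp at this
    exact this
  · have := key 1 (by omega)
    simp at this
    exact this
  · have := key 2 (by omega)
    simp at this
    exact this

end Construction3
/-- if the cell graph of a monotone gridding matrix `M` contains a cycle,
then for every `p ≥ 1` there is a monotone gridding matrix `M_p` with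
`Grid(M_p) ⊆ Grid(M)` whose cell graph is a proper turning path of length ≥ p. -/
theorem exists_proper_turning_path_subclass {k l : ℕ} (M : Fin k → Fin l → Option Bool)
    (hcyc : ¬ (monCellGraph M).IsAcyclic) (p : ℕ) (hp : 1 ≤ p) :
    ∃ (k' l' : ℕ) (M' : Fin k' → Fin l' → Option Bool),
      (∀ (n : ℕ) (π : Equiv.Perm (Fin n)), MonGriddable M' π → MonGriddable M π) ∧
      ∃ (u v : Fin k' × Fin l') (w : (monCellGraph M').Walk u v),
        w.IsPath ∧ p ≤ w.length ∧ ProperTurning w.support ∧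
        (∀ q : Fin k' × Fin l', (M' q.1 q.2).isSome → q ∈ w.support) ∧
        (∀ e ∈ (monCellGraph M').edgeSet, e ∈ w.edges) := by
  classical
  obtain ⟨u, hne, halt0, halt1⟩ := exists_alt_walk hcyc
  have hk : 0 < QQ p * k := Nat.mul_pos (hQpos p) (u 0).1.pos
  have hl : 0 < QQ p * l := Nat.mul_pos (hQpos p) (u 0).2.pos
  refine ⟨QQ p * k, QQ p * l, Mp M u p, grid_sub M u p hne halt0 halt1, ?_⟩
  obtain ⟨w, hwlen, hwsup, hwedg⟩ := build_walk (monCellGraph (Mp M u p)) (2*p)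
    (Vv M u p hk hl) (fun t ht => adjStep M u p hne halt0 halt1 (by omega))
  have reconstruct : ∀ (x : Fin (QQ p * k)) (y : Fin (QQ p * l)), (Mp M u p x y).isSome →
      ∃ t, t ≤ 2*p ∧ x = (Vv M u p hk hl t).1 ∧ y = (Vv M u p hk hl t).2 := by
    intro x y hxy
    obtain ⟨t, ht, hx, hy⟩ := Mp_some M u p hxy
    exact ⟨t, ht, Fin.ext (by rw [(Vv_val M u p ht).1, ← hx]),
      Fin.ext (by rw [(Vv_val M u p ht).2, ← hy])⟩
  have hVinj : ∀ t1 t2, t1 ≤ 2*p → t2 ≤ 2*p →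
      Vv M u p hk hl t1 = Vv M u p hk hl t2 → t1 = t2 := by
    intro t1 t2 h1 h2 hEq
    have hXe : Xc M u p t1 = Xc M u p t2 := by
      rw [← (Vv_val M u p (hk := hk) (hl := hl) h1).1, ← (Vv_val M u p (hk := hk) (hl := hl) h2).1, hEq]
    have hYe : Yc M u p t1 = Yc M u p t2 := by
      rw [← (Vv_val M u p (hk := hk) (hl := hl) h1).2, ← (Vv_val M u p (hk := hk) (hl := hl) h2).2, hEq]
    obtain ⟨_, hcol⟩ := colUnique M u p h1 h2 hXe
    obtain ⟨_, hrow⟩ := rowUnique M u p h1 h2 hYe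
    rcases hcol with h | ⟨hc1, hc2, hc3⟩
    · exact h
    · rcases hrow with h | h
      · exact h
      · omega
  refine ⟨Vv M u p hk hl 0, Vv M u p hk hl (2*p), w, ?_, ?_, ?_, ?_, ?_⟩
  · -- IsPath
    rw [SimpleGraph.Walk.isPath_def, hwsup]
    apply List.Nodup.map_on ?_ List.nodup_range
    intro t1 ht1 t2 ht2 hEq
    have h1 := List.mem_range.mp ht1
    have h2 := List.mem_range.mp ht2
    exact hVinj t1 t2 (by omega) (by omega) hEq
  · omega
  · -- ProperTurning
    intro a b c hinf
    rw [hwsup] at hinf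
    obtain ⟨i, hi2, ha, hb, hc⟩ := infix_triple _ _ a b c hinf
    subst ha; subst hb; subst hc
    by_cases hpar : i % 2 = 0
    · constructor
      · rintro ⟨h1, -⟩
        have hXe : Xc M u p i = Xc M u p (i+1) := by
          rw [← (Vv_val M u p (hk := hk) (hl := hl) (t := i) (by omega)).1,
              ← (Vv_val M u p (hk := hk) (hl := hl) (t := i+1) (by omega)).1, h1]
        exact (halt0 i hpar).2 (Fin.ext
          ((addQ_inj p hXe (ao_lt M u p (by omega)) (ao_lt M u p (by omega))).1))
      · rintro ⟨-, h2⟩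
        have hYe : Yc M u p (i+1) = Yc M u p (i+2) := by
          rw [← (Vv_val M u p (hk := hk) (hl := hl) (t := i+1) (by omega)).2,
              ← (Vv_val M u p (hk := hk) (hl := hl) (t := i+2) (by omega)).2, h2]
        exact (halt1 (i+1) (by omega)).2 (Fin.ext
          ((addQ_inj p hYe (bo_lt M u p (by omega)) (bo_lt M u p (by omega))).1))
    · constructor
      · rintro ⟨-, h1⟩
        have hXe : Xc M u p (i+1) = Xc M u p (i+2) := by
          rw [← (Vv_val M u p (hk := hk) (hl := hl) (t := i+1) (by omega)).1,
              ← (Vv_val M u p (hk := hk) (hl := hl) (t := i+2) (by omega)).1, h1]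
        exact (halt0 (i+1) (by omega)).2 (Fin.ext
          ((addQ_inj p hXe (ao_lt M u p (by omega)) (ao_lt M u p (by omega))).1))
      · rintro ⟨h2, -⟩
        have hYe : Yc M u p i = Yc M u p (i+1) := by
          rw [← (Vv_val M u p (hk := hk) (hl := hl) (t := i) (by omega)).2,
              ← (Vv_val M u p (hk := hk) (hl := hl) (t := i+1) (by omega)).2, h2]
        exact (halt1 i (by omega)).2 (Fin.ext
          ((addQ_inj p hYe (bo_lt M u p (by omega)) (bo_lt M u p (by omega))).1))
  · -- all nonempty cells on the walk
    rintro ⟨x, y⟩ hq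
    obtain ⟨t, ht, hx, hy⟩ := reconstruct x y hq
    rw [hwsup]
    apply List.mem_map.mpr
    refine ⟨t, List.mem_range.mpr (by omega), ?_⟩
    exact (Prod.ext hx hy).symm
  · -- all edges on the walk
    intro e he
    induction e using Sym2.ind with
    | _ x y =>
      rw [SimpleGraph.mem_edgeSet] at he
      have hne' : x ≠ y := he.ne
      obtain ⟨hs1, hs2, hshare⟩ := adj_ne he
      obtain ⟨t1, ht1, hx1, hy1⟩ := reconstruct x.1 x.2 hs1
      obtain ⟨t2, ht2, hx2, hy2⟩ := reconstruct y.1 y.2 hs2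
      have hxV : x = Vv M u p hk hl t1 := Prod.ext hx1 hy1
      have hyV : y = Vv M u p hk hl t2 := Prod.ext hx2 hy2
      have htne : t1 ≠ t2 := by
        intro hEq
        rw [hEq] at hxV
        exact hne' (by rw [hxV, hyV])
      have hmem : ∃ t, t < 2*p ∧
          ((t1 = t ∧ t2 = t+1) ∨ (t2 = t ∧ t1 = t+1)) := by
        rcases hshare with ⟨hrowe, _⟩ | ⟨hcole, _⟩
        · -- same fine row
          have hYe : Yc M u p t1 = Yc M u p t2 := by
            rw [← (Vv_val M u p (hk := hk) (hl := hl) ht1).2, ← (Vv_val M u p (hk := hk) (hl := hl) ht2).2, ← hxV, ← hyV, hrowe]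
          obtain ⟨_, hrow⟩ := rowUnique M u p ht1 ht2 hYe
          rcases hrow with h | h
          · exact absurd h htne
          · refine ⟨2*(t1/2), by omega, by omega⟩
        · -- same fine column
          have hXe : Xc M u p t1 = Xc M u p t2 := by
            rw [← (Vv_val M u p (hk := hk) (hl := hl) ht1).1, ← (Vv_val M u p (hk := hk) (hl := hl) ht2).1, ← hxV, ← hyV, hcole]
          obtain ⟨_, hcol⟩ := colUnique M u p ht1 ht2 hXe
          rcases hcol with h | ⟨h, hg1, hg2⟩
          · exact absurd h htne
          · refine ⟨2*((t1-1)/2)+1, by omega, by omega⟩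
      obtain ⟨t, htlt, hcs⟩ := hmem
      rw [hwedg]
      apply List.mem_map.mpr
      refine ⟨t, List.mem_range.mpr htlt, ?_⟩
      rcases hcs with ⟨e1, e2⟩ | ⟨e1, e2⟩
      · rw [hxV, hyV, e1, e2]
      · rw [hxV, hyV, e1, e2]
        exact Sym2.eq_swap
end

section
/- For a permutation class C, the following are equivalent: (a) C has unbounded horizontal path-width; (b) C contains arbitrarily large horizontal alternations; (c) C contains a horizontal monotone juxtaposition Grid(D₁ D₂) with D₁, D₂ ∈ {Inc, Dec} as a subclass. -/
namespace PPM

noncomputable section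

lemma le_intervalicity_of_sep {n : ℕ} {A T : Finset (Fin n)} (hT : T ⊆ A)
    (hsep : ∀ a ∈ T, ∀ b ∈ T, a < b → ∃ c : Fin n, a < c ∧ c < b ∧ c ∉ A) :
    T.card ≤ intervalicity A := by
  apply le_csInf
  · refine ⟨(A.image fun a => ({a} : Finset (Fin n))).card, A.image fun a => {a}, rfl, ?_, ?_, ?_⟩
    · intro I hI
      obtain ⟨a, _, rfl⟩ := Finset.mem_image.mp hI
      exact ⟨a, a, by simp⟩
    · intro I hI J hJ hIJ
      simp only [Finset.coe_image, Set.mem_image] at hI hJ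
      obtain ⟨a, _, rfl⟩ := hI; obtain ⟨b, _, rfl⟩ := hJ
      rw [Function.onFun, id, id, Finset.disjoint_left]
      intro x hx hx'
      simp only [Finset.mem_singleton] at hx hx'
      exact hIJ (by rw [← hx, ← hx'])
    · ext x
      simp [Finset.mem_sup]
  · rintro m ⟨F, rfl, hint, hdisj, hsup⟩
    have hmem : ∀ t ∈ T, ∃ I ∈ F, t ∈ I := by
      intro t ht
      have := hT ht
      rw [← hsup] at this
      exact Finset.mem_sup.mp this
    classical
    set φ : Fin n → Finset (Fin n) := fun t =>
      if h : ∃ I ∈ F, t ∈ I then h.choose else ∅ with hφ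
    have hφF : ∀ t ∈ T, φ t ∈ F ∧ t ∈ φ t := by
      intro t ht
      have h := hmem t ht
      simp only [hφ, dif_pos h]
      exact ⟨h.choose_spec.1, h.choose_spec.2⟩
    apply Finset.card_le_card_of_injOn φ (fun t ht => (hφF t ht).1)
    have key : ∀ t ∈ T, ∀ t' ∈ T, φ t = φ t' → t < t' → False := by
      intro t ht t' ht' heq hlt
      obtain ⟨c, hc1, hc2, hc3⟩ := hsep t ht t' ht' hlt
      obtain ⟨a, b, hab⟩ := hint (φ t) (hφF t ht).1
      have htm := (hφF t ht).2
      have htm' := (hφF t' ht').2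
      rw [← heq] at htm'
      rw [hab, Finset.mem_Icc] at htm htm'
      have : c ∈ φ t := by rw [hab, Finset.mem_Icc]; constructor <;> omega
      apply hc3
      rw [← hsup]
      exact Finset.mem_sup.mpr ⟨φ t, (hφF t ht).1, this⟩
    intro t ht t' ht' heq
    by_contra hne
    rcases Ne.lt_or_gt hne with hlt | hlt
    · exact key t ht t' ht' heq hlt
    · exact key t' ht' t ht heq.symm hlt

lemma intervalicity_le_one_Icc {n : ℕ} (a b : Fin n) :
    intervalicity (Finset.Icc a b) ≤ 1 := by
  apply Nat.sInf_le
  refine ⟨{Finset.Icc a b}, Finset.card_singleton _, ?_, ?_, ?_⟩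
  · intro I hI; rw [Finset.mem_singleton] at hI; exact ⟨a, b, hI⟩
  · simp [Set.pairwiseDisjoint_singleton]
  · simp

def predF {n : ℕ} (v : Fin n) : Fin n := ⟨v.val - 1, by have := v.isLt; omega⟩

def starts {n : ℕ} (A : Finset (Fin n)) : Finset (Fin n) :=
  A.filter fun v => v.val = 0 ∨ predF v ∉ A

lemma intervalicity_le_starts {n : ℕ} (A : Finset (Fin n)) :
    intervalicity A ≤ (starts A).card := by
  classical
  set E : Fin n → Fin n := fun s =>
    if h : (A.filter fun b => s ≤ b ∧ Finset.Icc s b ⊆ A).Nonempty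
    then (A.filter fun b => s ≤ b ∧ Finset.Icc s b ⊆ A).max' h else s with hE
  have hne : ∀ s ∈ A, (A.filter fun b => s ≤ b ∧ Finset.Icc s b ⊆ A).Nonempty := by
    intro s hs
    exact ⟨s, Finset.mem_filter.mpr ⟨hs, le_refl s, by rw [Finset.Icc_self]; simpa using hs⟩⟩
  have hE1 : ∀ s ∈ A, s ≤ E s ∧ Finset.Icc s (E s) ⊆ A := by
    intro s hs
    have h := hne s hs
    have hmem := Finset.max'_mem _ h
    rw [Finset.mem_filter] at hmem
    simp only [hE, dif_pos h]
    exact ⟨hmem.2.1, hmem.2.2⟩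
  have hE2 : ∀ s ∈ A, ∀ b, s ≤ b → Finset.Icc s b ⊆ A → b ≤ E s := by
    intro s hs b hb hsub
    have h := hne s hs
    simp only [hE, dif_pos h]
    exact Finset.le_max' _ b (Finset.mem_filter.mpr ⟨hsub (Finset.mem_Icc.mpr ⟨hb, le_refl b⟩), hb, hsub⟩)
  refine le_trans (Nat.sInf_le ?_) (Finset.card_image_le
    (f := fun s => Finset.Icc s (E s)) (s := starts A))
  refine ⟨(starts A).image fun s => Finset.Icc s (E s), rfl, ?_, ?_, ?_⟩
  · intro I hI
    obtain ⟨s, _, rfl⟩ := Finset.mem_image.mp hI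
    exact ⟨s, E s, rfl⟩
  · have key : ∀ s ∈ starts A, ∀ s' ∈ starts A, s < s' →
        Disjoint (Finset.Icc s (E s)) (Finset.Icc s' (E s')) := by
      intro s hs s' hs' hlt
      rw [Finset.disjoint_left]
      intro x hx hx'
      rw [Finset.mem_Icc] at hx hx'
      have hsA := (Finset.mem_filter.mp hs).1
      have hs'p := (Finset.mem_filter.mp hs').2
      have hs'ne : s'.val ≠ 0 := by
        have := hlt
        rw [Fin.lt_def] at this
        omega
      have hp : predF s' ∉ A := by
        rcases hs'p with h | h
        · exact absurd h hs'ne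
        · exact h
      apply hp
      apply (hE1 s hsA).2
      rw [Finset.mem_Icc]
      have h1 := hx.1; have h2 := hx.2; have h3 := hx'.1
      rw [Fin.le_def] at h1 h2 h3
      rw [Fin.lt_def] at hlt
      have hpv : (predF s').val = s'.val - 1 := rfl
      constructor
      · rw [Fin.le_def]; omega
      · rw [Fin.le_def]; omega
    intro I hI J hJ hIJ
    simp only [Finset.coe_image, Set.mem_image, Finset.mem_coe] at hI hJ
    obtain ⟨s, hs, rfl⟩ := hI; obtain ⟨s', hs', rfl⟩ := hJ
    rw [Function.onFun, id, id]
    have hne' : s ≠ s' := by rintro rfl; exact hIJ rfl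
    rcases Ne.lt_or_gt hne' with h | h
    · exact key s hs s' hs' h
    · exact (key s' hs' s hs h).symm
  · ext v
    rw [Finset.mem_sup]
    constructor
    · rintro ⟨I, hI, hvI⟩
      obtain ⟨s, hs, rfl⟩ := Finset.mem_image.mp hI
      exact (hE1 s (Finset.mem_filter.mp hs).1).2 hvI
    · intro hv
      have hQ : ∃ t, ∃ h : t < n, (⟨t, h⟩ : Fin n) ≤ v ∧ Finset.Icc ⟨t, h⟩ v ⊆ A := by
        refine ⟨v.val, v.isLt, le_refl v, ?_⟩
        rw [Finset.Icc_self]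
        simpa using hv
      classical
      set u := Nat.find hQ with hu
      obtain ⟨hlt, hle, hsub⟩ := Nat.find_spec hQ
      set s : Fin n := ⟨u, hlt⟩ with hsdef
      have hsA : s ∈ A := hsub (Finset.mem_Icc.mpr ⟨le_refl s, hle⟩)
      have hstart : s ∈ starts A := by
        rw [starts, Finset.mem_filter]
        refine ⟨hsA, ?_⟩
        by_cases h0 : u = 0
        · left; exact h0
        · right
          intro hpred
          have hQ' : ∃ h : u - 1 < n, (⟨u - 1, h⟩ : Fin n) ≤ v ∧ Finset.Icc ⟨u - 1, h⟩ v ⊆ A := by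
            refine ⟨by omega, ?_, ?_⟩
            · have h1 : u ≤ v.val := hle
              rw [Fin.le_def]; show u - 1 ≤ v.val; omega
            · intro x hx
              rw [Finset.mem_Icc, Fin.le_def, Fin.le_def] at hx
              simp at hx
              by_cases hxu : x.val = u - 1
              · have : x = predF s := by
                  apply Fin.ext; simp [predF, hsdef, hxu]
                rw [this]; exact hpred
              · apply hsub
                rw [Finset.mem_Icc, Fin.le_def, Fin.le_def]
                constructor
                · simp [hsdef]; omega
                · exact hx.2
          exact Nat.find_min hQ (m := u - 1) (by omega) hQ'
      refine ⟨Finset.Icc s (E s), Finset.mem_image_of_mem _ hstart, ?_⟩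
      simp only [id_eq, Finset.mem_Icc]
      exact ⟨hle, hE2 s hsA v hle hsub⟩

lemma intervalicity_le_gaps {n : ℕ} (A : Finset (Fin n)) :
    intervalicity A ≤ (A.filter fun v => v.val ≠ 0 ∧ predF v ∉ A).card + 1 := by
  classical
  refine le_trans (intervalicity_le_starts A) ?_
  have h1 : starts A ⊆ (A.filter fun v => v.val ≠ 0 ∧ predF v ∉ A) ∪ (A.filter fun v => v.val = 0) := by
    intro x hx
    rw [starts, Finset.mem_filter] at hx
    rw [Finset.mem_union, Finset.mem_filter, Finset.mem_filter]
    by_cases h0 : x.val = 0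
    · right; exact ⟨hx.1, h0⟩
    · left
      refine ⟨hx.1, h0, ?_⟩
      rcases hx.2 with h | h
      · exact absurd h h0
      · exact h
  refine le_trans (Finset.card_le_card h1) ?_
  refine le_trans (Finset.card_union_le _ _) ?_
  gcongr
  apply Finset.card_le_one.mpr
  intro a ha b hb
  rw [Finset.mem_filter] at ha hb
  apply Fin.ext; omega

variable (f : ℕ → ℕ) (r : ℕ → ℕ → Prop) [DecidableRel r]

def clen (i : ℕ) : ℕ :=
  1 ⊔ ((Finset.range i).attach.sup (fun j =>
    if r (f j.1) (f i) then clen j.1 + 1 else 1))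
termination_by i
decreasing_by exact Finset.mem_range.mp j.2

lemma one_le_clen (i : ℕ) : 1 ≤ clen f r i := by
  rw [clen]; exact le_max_left _ _

lemma clen_lt_clen {j i : ℕ} (hj : j < i) (hr : r (f j) (f i)) :
    clen f r j < clen f r i := by
  conv_rhs => rw [clen]
  have : clen f r j + 1 ≤ (Finset.range i).attach.sup (fun j' =>
      if r (f j'.1) (f i) then clen f r j'.1 + 1 else 1) := by
    refine Finset.le_sup (b := ⟨j, Finset.mem_range.mpr hj⟩) (Finset.mem_attach _ _) |>.trans_eq' ?_
    rw [if_pos hr]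
  omega

lemma exists_chain_of_clen {t : ℕ} (ht : 1 ≤ t) :
    ∀ i, t ≤ clen f r i →
    ∃ l : List ℕ, l.length = t ∧ l.Chain' (fun x y => x < y ∧ r (f x) (f y)) ∧
      l.getLast? = some i ∧ ∀ x ∈ l, x ≤ i := by
  induction t with
  | zero => omega
  | succ t ih =>
    intro i hi
    rcases Nat.eq_zero_or_pos t with rfl | ht'
    · exact ⟨[i], rfl, List.isChain_singleton i, rfl, by simp⟩
    · -- t ≥ 1, clen i ≥ t+1 ≥ 2
      rw [clen] at hi
      have hsup : t + 1 ≤ (Finset.range i).attach.sup (fun j =>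
          if r (f j.1) (f i) then clen f r j.1 + 1 else 1) := by
        rcases le_max_iff.mp hi with h | h
        · omega
        · exact h
      rw [Finset.le_sup_iff (by simp)] at hsup
      obtain ⟨⟨j, hjr⟩, _, hjv0⟩ := hsup
      have hjv : t + 1 ≤ if r (f j) (f i) then clen f r j + 1 else 1 := hjv0
      have hj : j < i := Finset.mem_range.mp hjr
      by_cases hr : r (f j) (f i)
      · rw [if_pos hr] at hjv
        obtain ⟨l, hlen, hchain, hlast, hbd⟩ := ih ht' j (by omega)
        refine ⟨l ++ [i], by simp [hlen], ?_, List.getLast?_concat, ?_⟩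
        · show List.IsChain _ (l ++ [i])
          rw [List.isChain_append]
          refine ⟨hchain, List.isChain_singleton i, ?_⟩
          intro x hx y hy
          rw [hlast] at hx
          obtain rfl := Option.some_injective _ hx
          simp at hy
          subst hy
          exact ⟨hj, hr⟩
        · intro x hx
          rw [List.mem_append] at hx
          rcases hx with hx | hx
          · exact le_trans (hbd x hx) (by omega)
          · simp at hx; omega
      · rw [if_neg hr] at hjv; omega

lemma erdos_szekeres_aux {N a : ℕ} (ha : 1 ≤ a)
    (hf : ∀ x y, x < N → y < N → f x = f y → x = y)
    (hN : (a - 1) * (a - 1) + 1 ≤ N) :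
    ∃ i < N, a ≤ clen f (· < ·) i ∨ a ≤ clen f (· > ·) i := by
  by_contra hcon
  push_neg at hcon
  have hmap : ∀ i ∈ Finset.range N,
      (clen f (· < ·) i, clen f (· > ·) i) ∈
        Finset.Icc 1 (a-1) ×ˢ Finset.Icc 1 (a-1) := by
    intro i hi
    rw [Finset.mem_range] at hi
    obtain ⟨h1, h2⟩ := hcon i hi
    rw [Finset.mem_product, Finset.mem_Icc, Finset.mem_Icc]
    have := one_le_clen f (· < ·) i
    have := one_le_clen f (· > ·) i
    omega
  have hinj : Set.InjOn (fun i => (clen f (· < ·) i, clen f (· > ·) i))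
      (Finset.range N) := by
    intro x hx y hy hxy
    rw [Finset.coe_range, Set.mem_Iio] at hx hy
    by_contra hne
    rcases Ne.lt_or_gt hne with h | h
    · have hfne : f x ≠ f y := fun he => hne (hf x y (by omega) (by omega) he)
      rcases Ne.lt_or_gt hfne with hfl | hfl
      · have := clen_lt_clen f (· < ·) h hfl
        have h2 : clen f (· < ·) x = clen f (· < ·) y := congrArg Prod.fst hxy
        omega
      · have := clen_lt_clen f (· > ·) h hfl
        have h2 : clen f (· > ·) x = clen f (· > ·) y := congrArg Prod.snd hxy
        omega
    · have hfne : f y ≠ f x := fun he => hne (hf x y (by omega) (by omega) he.symm)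
      rcases Ne.lt_or_gt hfne with hfl | hfl
      · have := clen_lt_clen f (· < ·) h hfl
        have h2 : clen f (· < ·) x = clen f (· < ·) y := congrArg Prod.fst hxy
        omega
      · have := clen_lt_clen f (· > ·) h hfl
        have h2 : clen f (· > ·) x = clen f (· > ·) y := congrArg Prod.snd hxy
        omega
  have hcard := Finset.card_le_card_of_injOn _ hmap hinj
  rw [Finset.card_range, Finset.card_product, Nat.card_Icc] at hcard
  have : a - 1 + 1 - 1 = a - 1 := by omega
  rw [this] at hcard
  omega

theorem erdos_szekeres {N a n : ℕ} (g : Fin N → Fin n) (hg : Function.Injective g)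
    (hN : (a - 1) * (a - 1) + 1 ≤ N) :
    ∃ s : Fin a → Fin N, StrictMono s ∧ (StrictMono (g ∘ s) ∨ StrictAnti (g ∘ s)) := by
  rcases Nat.eq_zero_or_pos a with rfl | ha
  · exact ⟨Fin.elim0 ∘ Fin.cast (by rfl), fun i => i.elim0, Or.inl fun i => i.elim0⟩
  classical
  set f : ℕ → ℕ := fun j => if h : j < N then (g ⟨j, h⟩).val else 0 with hf
  have hfinj : ∀ x y, x < N → y < N → f x = f y → x = y := by
    intro x y hx hy hxy
    simp only [hf, dif_pos hx, dif_pos hy] at hxy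
    have := hg (Fin.val_injective (by exact_mod_cast hxy))
    exact congrArg Fin.val this
  obtain ⟨i, hiN, hclen⟩ := erdos_szekeres_aux f ha hfinj hN
  -- extract chain
  rcases hclen with hc | hc
  · obtain ⟨l, hlen, hchain, hlast, hbd⟩ :=
      exists_chain_of_clen f (· < ·) ha i hc
    have hpw : l.Pairwise (fun x y => x < y ∧ f x < f y) := by
      have : IsTrans ℕ (fun x y => x < y ∧ f x < f y) :=
        ⟨fun a b c h1 h2 => ⟨lt_trans h1.1 h2.1, lt_trans h1.2 h2.2⟩⟩
      exact List.isChain_iff_pairwise.mp hchain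
    have hmem : ∀ x ∈ l, x < N := fun x hx => lt_of_le_of_lt (hbd x hx) hiN
    have hget := List.pairwise_iff_get.mp hpw
    have hgm : ∀ idx : Fin l.length, l.get idx ∈ l := fun idx => List.get_mem l idx
    refine ⟨fun t => ⟨l.get (Fin.cast hlen.symm t),
      hmem _ (hgm _)⟩, ?_, Or.inl ?_⟩
    · intro t t' htt
      have := hget (Fin.cast hlen.symm t) (Fin.cast hlen.symm t') (by simpa using htt)
      exact this.1
    · intro t t' htt
      have h2 := (hget (Fin.cast hlen.symm t) (Fin.cast hlen.symm t') (by simpa using htt)).2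
      have e1 : ∀ u : Fin a, f (l.get (Fin.cast hlen.symm u)) =
          (g ⟨l.get (Fin.cast hlen.symm u), hmem _ (hgm _)⟩).val := by
        intro u
        simp only [hf, dif_pos (hmem _ (hgm (Fin.cast hlen.symm u)))]
      rw [e1 t, e1 t'] at h2
      exact h2
  · obtain ⟨l, hlen, hchain, hlast, hbd⟩ :=
      exists_chain_of_clen f (· > ·) ha i hc
    have hpw : l.Pairwise (fun x y => x < y ∧ f x > f y) := by
      have : IsTrans ℕ (fun x y => x < y ∧ f x > f y) :=
        ⟨fun a b c h1 h2 => ⟨lt_trans h1.1 h2.1, lt_trans h2.2 h1.2⟩⟩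
      exact List.isChain_iff_pairwise.mp hchain
    have hmem : ∀ x ∈ l, x < N := fun x hx => lt_of_le_of_lt (hbd x hx) hiN
    have hget := List.pairwise_iff_get.mp hpw
    have hgm : ∀ idx : Fin l.length, l.get idx ∈ l := fun idx => List.get_mem l idx
    refine ⟨fun t => ⟨l.get (Fin.cast hlen.symm t),
      hmem _ (hgm _)⟩, ?_, Or.inr ?_⟩
    · intro t t' htt
      have := hget (Fin.cast hlen.symm t) (Fin.cast hlen.symm t') (by simpa using htt)
      exact this.1
    · intro t t' htt
      have h2 := (hget (Fin.cast hlen.symm t) (Fin.cast hlen.symm t') (by simpa using htt)).2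
      have e1 : ∀ u : Fin a, f (l.get (Fin.cast hlen.symm u)) =
          (g ⟨l.get (Fin.cast hlen.symm u), hmem _ (hgm _)⟩).val := by
        intro u
        simp only [hf, dif_pos (hmem _ (hgm (Fin.cast hlen.symm u)))]
      rw [e1 t, e1 t'] at h2
      exact h2

def sg (b : Bool) (m t : ℕ) : ℕ := if b then t else m - 1 - t

lemma sg_lt {b : Bool} {m t : ℕ} (h : t < m) : sg b m t < m := by
  unfold sg; split <;> omega

lemma sg_sg {b : Bool} {m t : ℕ} (h : t < m) : sg b m (sg b m t) = t := by
  unfold sg; split <;> omega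

def altVal (b₁ b₂ : Bool) (m : ℕ) (i : Fin (2 * m)) : Fin (2 * m) :=
  if h : i.val < m then ⟨2 * sg b₁ m i.val + 1, by
    have := sg_lt (b := b₁) h; omega⟩
  else ⟨2 * sg b₂ m (i.val - m), by
    have hi := i.isLt
    have := sg_lt (b := b₂) (t := i.val - m) (m := m) (by omega); omega⟩

lemma altVal_val_lt' {b₁ b₂ : Bool} {m : ℕ} {i : Fin (2 * m)} (h : i.val < m) :
    (altVal b₁ b₂ m i).val = 2 * sg b₁ m i.val + 1 := by
  unfold altVal; rw [dif_pos h]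

lemma altVal_val_ge' {b₁ b₂ : Bool} {m : ℕ} {i : Fin (2 * m)} (h : ¬ i.val < m) :
    (altVal b₁ b₂ m i).val = 2 * sg b₂ m (i.val - m) := by
  unfold altVal; rw [dif_neg h]

lemma altVal_inj (b₁ b₂ : Bool) (m : ℕ) : Function.Injective (altVal b₁ b₂ m) := by
  intro i j h
  have hi := i.isLt; have hj := j.isLt
  have h' : (altVal b₁ b₂ m i).val = (altVal b₁ b₂ m j).val := congrArg Fin.val h
  apply Fin.ext
  by_cases h1 : i.val < m <;> by_cases h2 : j.val < m
  · rw [altVal_val_lt' h1, altVal_val_lt' h2] at h'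
    unfold sg at h'; split_ifs at h' <;> omega
  · rw [altVal_val_lt' h1, altVal_val_ge' h2] at h'
    unfold sg at h'; split_ifs at h' <;> omega
  · rw [altVal_val_ge' h1, altVal_val_lt' h2] at h'
    unfold sg at h'; split_ifs at h' <;> omega
  · rw [altVal_val_ge' h1, altVal_val_ge' h2] at h'
    unfold sg at h'; split_ifs at h' <;> omega

def monAlt (b₁ b₂ : Bool) (m : ℕ) : Equiv.Perm (Fin (2 * m)) :=
  Equiv.ofBijective (altVal b₁ b₂ m)
    (Finite.injective_iff_bijective.mp (altVal_inj b₁ b₂ m))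

lemma monAlt_apply (b₁ b₂ : Bool) (m : ℕ) (i : Fin (2 * m)) :
    monAlt b₁ b₂ m i = altVal b₁ b₂ m i := rfl

lemma altVal_val_lt {b₁ b₂ : Bool} {m : ℕ} {i : Fin (2 * m)} (h : i.val < m) :
    (altVal b₁ b₂ m i).val = 2 * sg b₁ m i.val + 1 := altVal_val_lt' h

lemma altVal_val_ge {b₁ b₂ : Bool} {m : ℕ} {i : Fin (2 * m)} (h : ¬ i.val < m) :
    (altVal b₁ b₂ m i).val = 2 * sg b₂ m (i.val - m) := altVal_val_ge' h

lemma monAlt_isHorizAlt (b₁ b₂ : Bool) (m : ℕ) : IsHorizAlt (monAlt b₁ b₂ m) := by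
  intro i j hij ⟨ho, he⟩
  rw [Nat.odd_iff] at ho
  rw [Nat.even_iff] at he
  rw [monAlt_apply] at ho he
  rw [Fin.lt_def] at hij
  by_cases hi : i.val < m
  · rw [altVal_val_lt hi] at ho; omega
  · by_cases hj : j.val < m
    · omega
    · rw [altVal_val_ge hj] at he; omega

lemma monAlt_griddable (b₁ b₂ : Bool) (m : ℕ) :
    MonGriddable (juxH b₁ b₂) (monAlt b₁ b₂ m) := by
  classical
  refine ⟨fun i => if i.val < m then 0 else 1, fun _ => 0, ?_, monotone_const, ?_, ?_⟩
  · intro i j hij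
    rw [Fin.le_def] at hij
    show (if i.val < m then (0 : Fin 2) else 1) ≤ (if j.val < m then (0 : Fin 2) else 1)
    by_cases hi : i.val < m
    · by_cases hj : j.val < m
      · rw [if_pos hi, if_pos hj]
      · rw [if_pos hi, if_neg hj]
        decide
    · have hj : ¬ j.val < m := by omega
      rw [if_neg hi, if_neg hj]
  · intro i; simp [juxH]
  · intro i j hij hceq _ b hb
    rw [Fin.lt_def] at hij
    simp only [] at hceq hb
    by_cases hi : i.val < m
    · have hj : j.val < m := by
        by_contra hj
        rw [if_pos hi, if_neg hj] at hceq
        exact absurd hceq (by decide)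
      rw [if_pos hi] at hb
      have hbb : b₁ = b := by simpa [juxH] using hb
      subst hbb
      cases b₁
      · rw [if_neg (by simp)]
        rw [Fin.lt_def, monAlt_apply, monAlt_apply, altVal_val_lt hj, altVal_val_lt hi]
        unfold sg; rw [if_neg (by simp), if_neg (by simp)]; omega
      · rw [if_pos (by simp)]
        rw [Fin.lt_def, monAlt_apply, monAlt_apply, altVal_val_lt hi, altVal_val_lt hj]
        unfold sg; rw [if_pos rfl, if_pos rfl]; omega
    · have hj : ¬ j.val < m := by omega
      rw [if_neg hi] at hb
      have hbb : b₂ = b := by simpa [juxH] using hb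
      subst hbb
      have hi2 := i.isLt; have hj2 := j.isLt
      cases b₂
      · rw [if_neg (by simp)]
        rw [Fin.lt_def, monAlt_apply, monAlt_apply, altVal_val_ge hi, altVal_val_ge hj]
        unfold sg; rw [if_neg (by simp), if_neg (by simp)]; omega
      · rw [if_pos (by simp)]
        rw [Fin.lt_def, monAlt_apply, monAlt_apply, altVal_val_ge hi, altVal_val_ge hj]
        unfold sg; rw [if_pos rfl, if_pos rfl]; omega

/-- every juxtaposed permutation is contained in a big enough monotone alternation -/

lemma contains_of_griddable {b₁ b₂ : Bool} {n N : ℕ} (hn : n ≤ N)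
    (π : Equiv.Perm (Fin n)) (h : MonGriddable (juxH b₁ b₂) π) :
    Contains (monAlt b₁ b₂ N) π := by
  classical
  obtain ⟨c, r, hc, _, _, hcell⟩ := h
  have hpos : ∀ i : Fin n, (π i).val < N := fun i => lt_of_lt_of_le (π i).isLt hn
  set f : Fin n → Fin (2 * N) := fun i =>
    if c i = 0 then ⟨sg b₁ N (π i).val, by have := sg_lt (b := b₁) (hpos i); omega⟩
    else ⟨N + sg b₂ N (π i).val, by have := sg_lt (b := b₂) (hpos i); omega⟩ with hf
  have hfl : ∀ i, c i = 0 → (f i).val = sg b₁ N (π i).val := by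
    intro i h0; simp only [hf]; rw [if_pos h0]
  have hfr : ∀ i, ¬ c i = 0 → (f i).val = N + sg b₂ N (π i).val := by
    intro i h0; simp only [hf]; rw [if_neg h0]
  have hval : ∀ i, ((monAlt b₁ b₂ N) (f i)).val
      = 2 * (π i).val + (if c i = 0 then 1 else 0) := by
    intro i
    rw [monAlt_apply]
    by_cases h0 : c i = 0
    · have hlt : (f i).val < N := by rw [hfl i h0]; exact sg_lt (hpos i)
      rw [altVal_val_lt hlt, hfl i h0, sg_sg (hpos i), if_pos h0]
    · have hlt : ¬ (f i).val < N := by rw [hfr i h0]; omega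
      rw [altVal_val_ge hlt, hfr i h0, if_neg h0]
      have he : N + sg b₂ N (π i).val - N = sg b₂ N (π i).val := by omega
      rw [he, sg_sg (hpos i)]
      omega
  refine ⟨f, ?_, ?_⟩
  · intro i j hij
    have hcij : c i ≤ c j := hc (le_of_lt hij)
    rw [Fin.le_def] at hcij
    have h2i := (c i).isLt; have h2j := (c j).isLt
    have hpi := hpos i; have hpj := hpos j
    by_cases h0i : c i = 0
    · by_cases h0j : c j = 0
      · have hb : juxH b₁ b₂ (c i) (r (π i)) = some b₁ := by simp [juxH, h0i]
        have horder := hcell i j hij (h0i.trans h0j.symm) (Subsingleton.elim _ _) b₁ hb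
        rw [Fin.lt_def, hfl i h0i, hfl j h0j]
        unfold sg
        cases b₁
        · rw [if_neg (by simp)] at horder
          rw [if_neg (by simp), if_neg (by simp)]
          rw [Fin.lt_def] at horder
          omega
        · rw [if_pos (by simp)] at horder
          rw [if_pos rfl, if_pos rfl]
          rw [Fin.lt_def] at horder
          omega
      · rw [Fin.lt_def, hfl i h0i, hfr j h0j]
        have := sg_lt (b := b₁) (hpos i); omega
    · by_cases h0j : c j = 0
      · exfalso
        have hv1 : (c i).val = 1 := by
          have : (c i).val ≠ 0 := fun hv => h0i (Fin.ext hv)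
          omega
        have hv0 : (c j).val = 0 := by rw [h0j]; rfl
        omega
      · have hceq : c i = c j := by
          apply Fin.ext
          have : (c i).val ≠ 0 := fun hv => h0i (Fin.ext hv)
          have : (c j).val ≠ 0 := fun hv => h0j (Fin.ext hv)
          omega
        have hb : juxH b₁ b₂ (c i) (r (π i)) = some b₂ := by simp [juxH, h0i]
        have horder := hcell i j hij hceq (Subsingleton.elim _ _) b₂ hb
        rw [Fin.lt_def, hfr i h0i, hfr j h0j]
        unfold sg
        cases b₂
        · rw [if_neg (by simp)] at horder
          rw [if_neg (by simp), if_neg (by simp)]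
          rw [Fin.lt_def] at horder
          omega
        · rw [if_pos (by simp)] at horder
          rw [if_pos rfl, if_pos rfl]
          rw [Fin.lt_def] at horder
          omega
  · intro i j
    rw [Fin.lt_def, Fin.lt_def, hval i, hval j]
    by_cases heq : π i = π j
    · have : i = j := π.injective heq
      subst this
      simp
    · have : (π i).val ≠ (π j).val := fun hv => heq (Fin.ext hv)
      split_ifs <;> omega

lemma prefixSet_one {n : ℕ} (π : Equiv.Perm (Fin n)) (i : Fin n) :
    prefixSet π 1 i = (Finset.Iic i).image (fun j => (j, π j)) := by
  unfold prefixSet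
  ext x
  simp [Finset.mem_image, Finset.mem_filter, Finset.mem_Iic]

lemma prefix_fst {n : ℕ} (π : Equiv.Perm (Fin n)) (i : Fin n) :
    (prefixSet π 1 i).image Prod.fst = Finset.Iic i := by
  rw [prefixSet_one]
  ext x
  simp [Finset.mem_image, Finset.mem_Iic]

lemma prefix_snd {n : ℕ} (π : Equiv.Perm (Fin n)) (i : Fin n) :
    (prefixSet π 1 i).image Prod.snd = (Finset.Iic i).image π := by
  rw [prefixSet_one]
  ext x
  simp [Finset.mem_image, Finset.mem_Iic]

lemma hpw_ge_of_alt {n m : ℕ} (π : Equiv.Perm (Fin n)) (halt : IsHorizAlt π)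
    (hm : 1 ≤ m) (hmn : 2 * m ≤ n) : m ≤ hpw π := by
  classical
  set Vodd : Finset (Fin n) := Finset.univ.filter (fun v : Fin n => v.val % 2 = 1) with hV
  have hVcard : m ≤ Vodd.card := by
    have := Finset.card_le_card_of_injOn
      (f := fun t : Fin m => (⟨2 * t.val + 1, by have := t.isLt; omega⟩ : Fin n))
      (s := Finset.univ) (t := Vodd)
      (fun t _ => by simp [hV])
      (fun t _ t' _ he => by
        have : 2 * t.val + 1 = 2 * t'.val + 1 := congrArg Fin.val he
        exact Fin.ext (by omega))
    simpa using this
  set P : Finset (Fin n) := Finset.univ.filter (fun p : Fin n => (π p).val % 2 = 1) with hP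
  have hdc : ∀ x ∈ P, ∀ y : Fin n, y ≤ x → y ∈ P := by
    intro x hx y hyx
    rw [hP, Finset.mem_filter] at hx ⊢
    refine ⟨Finset.mem_univ _, ?_⟩
    by_contra hy
    rcases eq_or_lt_of_le hyx with rfl | hlt
    · exact hy hx.2
    · refine halt y x hlt ⟨?_, ?_⟩
      · rw [Nat.odd_iff]; omega
      · rw [Nat.even_iff]; omega
  have hPne : P.Nonempty := by
    refine ⟨π.symm ⟨1, by omega⟩, ?_⟩
    rw [hP, Finset.mem_filter]
    refine ⟨Finset.mem_univ _, ?_⟩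
    rw [Equiv.apply_symm_apply]
    rfl
  set i₀ := P.max' hPne with hi₀
  have hIic : Finset.Iic i₀ = P := by
    ext y
    rw [Finset.mem_Iic]
    constructor
    · intro hy; exact hdc i₀ (P.max'_mem hPne) y hy
    · intro hy; exact P.le_max' y hy
  have himg : (Finset.Iic i₀).image π = Vodd := by
    rw [hIic]
    ext v
    rw [Finset.mem_image, hV, Finset.mem_filter]
    constructor
    · rintro ⟨p, hp, rfl⟩
      rw [hP, Finset.mem_filter] at hp
      exact ⟨Finset.mem_univ _, hp.2⟩
    · rintro ⟨-, hv⟩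
      refine ⟨π.symm v, ?_, Equiv.apply_symm_apply _ _⟩
      rw [hP, Finset.mem_filter]
      refine ⟨Finset.mem_univ _, ?_⟩
      rw [Equiv.apply_symm_apply]
      exact hv
  have hint : Vodd.card ≤ intervalicity Vodd := by
    apply le_intervalicity_of_sep (Finset.Subset.refl _)
    intro a ha b hb hab
    rw [hV, Finset.mem_filter] at ha hb
    rw [Fin.lt_def] at hab
    refine ⟨⟨a.val + 1, by have := b.isLt; omega⟩, ?_, ?_, ?_⟩
    · rw [Fin.lt_def]; simp
    · rw [Fin.lt_def]
      show a.val + 1 < b.val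
      omega
    · rw [hV, Finset.mem_filter]
      push_neg
      intro
      show ¬ (a.val + 1) % 2 = 1
      omega
  calc m ≤ Vodd.card := hVcard
    _ ≤ intervalicity Vodd := hint
    _ = intervalicity ((prefixSet π 1 i₀).image Prod.snd) := by rw [prefix_snd, himg]
    _ ≤ gridComplexity (prefixSet π 1 i₀) := le_max_right _ _
    _ ≤ hpw π := by unfold hpw pwOrd; exact Finset.le_sup (f := fun i => gridComplexity (prefixSet π 1 i)) (Finset.mem_univ i₀)

lemma exists_big_prefix {n t : ℕ} (π : Equiv.Perm (Fin n)) (ht : 2 ≤ t) (h : t ≤ hpw π) :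
    ∃ i : Fin n, t ≤ intervalicity ((Finset.Iic i).image π) := by
  unfold hpw pwOrd at h
  have h0 : (⊥ : ℕ) < t := by
    rw [bot_eq_zero]; omega
  rw [Finset.le_sup_iff h0] at h
  obtain ⟨i, -, hi⟩ := h
  refine ⟨i, ?_⟩
  have h1 : intervalicity ((prefixSet π 1 i).image Prod.fst) ≤ 1 := by
    haveI : NeZero n := ⟨by have := i.pos; omega⟩
    rw [prefix_fst]
    have hIcc : Finset.Iic i = Finset.Icc ⊥ i := by
      ext x; simp [Finset.mem_Icc, Finset.mem_Iic]
    rw [hIcc]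
    exact intervalicity_le_one_Icc _ _
  rcases le_max_iff.mp hi with h2 | h2
  · omega
  · rw [prefix_snd] at h2
    exact h2

lemma contains_monAlt_of_struct {n m : ℕ} (π : Equiv.Perm (Fin n)) (b₁ b₂ : Bool)
    (v g : Fin m → Fin n) (i₀ : Fin n)
    (hgv : ∀ t, g t < v t)
    (hvg : ∀ t t' : Fin m, t < t' → v t < g t')
    (hvpos : ∀ t, π.symm (v t) ≤ i₀)
    (hgpos : ∀ t, i₀ < π.symm (g t))
    (hb₁ : ∀ t t' : Fin m, t < t' →
      (if b₁ then π.symm (v t) < π.symm (v t') else π.symm (v t') < π.symm (v t)))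
    (hb₂ : ∀ t t' : Fin m, t < t' →
      (if b₂ then π.symm (g t) < π.symm (g t') else π.symm (g t') < π.symm (g t))) :
    Contains π (monAlt b₁ b₂ m) := by
  classical
  have hv : StrictMono v := fun t t' h => lt_trans (hvg t t' h) (hgv t')
  have hg : StrictMono g := fun t t' h => lt_trans (hgv t) (hvg t t' h)
  have hgv' : ∀ x y : Fin m, x ≤ y → g x < v y := by
    intro x y hxy
    rcases eq_or_lt_of_le hxy with rfl | h
    · exact hgv x
    · exact lt_trans (hg h) (hgv y)
  set w : Fin (2 * m) → Fin n := fun j =>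
    if j.val % 2 = 0 then g ⟨j.val / 2, by have := j.isLt; omega⟩
    else v ⟨j.val / 2, by have := j.isLt; omega⟩ with hw
  have hwmono : StrictMono w := by
    intro j j' hjj
    rw [Fin.lt_def] at hjj
    have hj := j.isLt; have hj' := j'.isLt
    simp only [hw]
    by_cases h1 : j.val % 2 = 0 <;> by_cases h2 : j'.val % 2 = 0
    · rw [if_pos h1, if_pos h2]
      exact hg (by rw [Fin.mk_lt_mk]; omega)
    · rw [if_pos h1, if_neg h2]
      exact hgv' _ _ (by rw [Fin.mk_le_mk]; omega)
    · rw [if_neg h1, if_pos h2]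
      exact hvg _ _ (by rw [Fin.mk_lt_mk]; omega)
    · rw [if_neg h1, if_neg h2]
      exact hv (by rw [Fin.mk_lt_mk]; omega)
  set f : Fin (2 * m) → Fin n := fun j =>
    if h : j.val < m then
      π.symm (v ⟨sg b₁ m j.val, sg_lt h⟩)
    else
      π.symm (g ⟨sg b₂ m (j.val - m), by
        have hj := j.isLt
        exact sg_lt (by omega)⟩) with hf
  have key : ∀ j, π (f j) = w ((monAlt b₁ b₂ m) j) := by
    intro j
    by_cases h : j.val < m
    · have hα : ((monAlt b₁ b₂ m) j).val = 2 * sg b₁ m j.val + 1 := by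
        rw [monAlt_apply]; exact altVal_val_lt h
      have h2 : ¬ ((monAlt b₁ b₂ m) j).val % 2 = 0 := by rw [hα]; omega
      simp only [hf, hw, dif_pos h, if_neg h2]
      rw [Equiv.apply_symm_apply]
      congr 1
      apply Fin.ext
      show sg b₁ m j.val = ((monAlt b₁ b₂ m) j).val / 2
      rw [hα]; omega
    · have hα : ((monAlt b₁ b₂ m) j).val = 2 * sg b₂ m (j.val - m) := by
        rw [monAlt_apply]; exact altVal_val_ge h
      have h2 : ((monAlt b₁ b₂ m) j).val % 2 = 0 := by rw [hα]; omega
      simp only [hf, hw, dif_neg h, if_pos h2]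
      rw [Equiv.apply_symm_apply]
      congr 1
      apply Fin.ext
      show sg b₂ m (j.val - m) = ((monAlt b₁ b₂ m) j).val / 2
      rw [hα]; omega
  refine ⟨f, ?_, ?_⟩
  · intro j j' hjj
    rw [Fin.lt_def] at hjj
    have hj := j.isLt; have hj' := j'.isLt
    by_cases h1 : j.val < m <;> by_cases h2 : j'.val < m
    · simp only [hf, dif_pos h1, dif_pos h2]
      cases b₁
      · have := hb₁ ⟨sg false m j'.val, sg_lt h2⟩ ⟨sg false m j.val, sg_lt h1⟩
          (by rw [Fin.mk_lt_mk]; unfold sg; simp; omega)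
        rw [if_neg (by simp)] at this
        exact this
      · have := hb₁ ⟨sg true m j.val, sg_lt h1⟩ ⟨sg true m j'.val, sg_lt h2⟩
          (by rw [Fin.mk_lt_mk]; unfold sg; simp; omega)
        rw [if_pos (by simp)] at this
        exact this
    · simp only [hf, dif_pos h1, dif_neg h2]
      exact lt_of_le_of_lt (hvpos _) (hgpos _)
    · omega
    · simp only [hf, dif_neg h1, dif_neg h2]
      cases b₂
      · have := hb₂ ⟨sg false m (j'.val - m), sg_lt (by omega)⟩
          ⟨sg false m (j.val - m), sg_lt (by omega)⟩
          (by rw [Fin.mk_lt_mk]; unfold sg; simp; omega)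
        rw [if_neg (by simp)] at this
        exact this
      · have := hb₂ ⟨sg true m (j.val - m), sg_lt (by omega)⟩
          ⟨sg true m (j'.val - m), sg_lt (by omega)⟩
          (by rw [Fin.mk_lt_mk]; unfold sg; simp; omega)
        rw [if_pos (by simp)] at this
        exact this
  · intro j j'
    rw [key j, key j']
    exact (hwmono.lt_iff_lt).symm

lemma exists_contains_monAlt {n m : ℕ} (π : Equiv.Perm (Fin n))
    (h : (m-1)*(m-1)*(m-1)*(m-1) + 3 ≤ hpw π) :
    ∃ b₁ b₂ : Bool, Contains π (monAlt b₁ b₂ m) := by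
  classical
  set M := (m-1)*(m-1)*(m-1)*(m-1) + 1 with hM
  obtain ⟨i, hi⟩ := exists_big_prefix π (by omega) (show M + 2 ≤ hpw π by omega)
  set B := (Finset.Iic i).image π with hB
  set S := B.filter (fun x => x.val ≠ 0 ∧ predF x ∉ B) with hS
  have hScard : M ≤ S.card := by
    have := intervalicity_le_gaps B
    rw [← hS] at this
    omega
  obtain ⟨T, hTS, hTcard⟩ := Finset.exists_subset_card_eq hScard
  set V := T.orderEmbOfFin hTcard with hV
  have hVmem : ∀ k, V k ∈ S := fun k => hTS (T.orderEmbOfFin_mem hTcard k)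
  have hVB : ∀ k, V k ∈ B := fun k => (Finset.mem_filter.mp (hVmem k)).1
  have hV0 : ∀ k, (V k).val ≠ 0 := fun k => (Finset.mem_filter.mp (hVmem k)).2.1
  have hVpred : ∀ k, predF (V k) ∉ B := fun k => (Finset.mem_filter.mp (hVmem k)).2.2
  set pv : Fin M → Fin n := fun k => π.symm (V k) with hpv
  have hpvle : ∀ k, pv k ≤ i := by
    intro k
    obtain ⟨j, hj, hje⟩ := Finset.mem_image.mp (hVB k)
    simp only [hpv]
    rw [← hje, Equiv.symm_apply_apply]
    exact Finset.mem_Iic.mp hj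
  set pg : Fin M → Fin n := fun k => π.symm (predF (V k)) with hpg
  have hpggt : ∀ k, i < pg k := by
    intro k
    by_contra hle
    push_neg at hle
    apply hVpred k
    refine Finset.mem_image.mpr ⟨pg k, Finset.mem_Iic.mpr hle, ?_⟩
    simp only [hpg]
    exact Equiv.apply_symm_apply _ _
  have hpvinj : Function.Injective pv :=
    fun a b hab => V.injective (π.symm.injective hab)
  have hpginj : Function.Injective pg := by
    intro a b hab
    have h1 : predF (V a) = predF (V b) := π.symm.injective hab
    have h2 : (V a).val - 1 = (V b).val - 1 := congrArg Fin.val h1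
    have := hV0 a; have := hV0 b
    exact V.injective (Fin.ext (by omega))
  obtain ⟨s, hs, hmono1⟩ := erdos_szekeres (a := (m-1)*(m-1)+1) pv hpvinj (by
    have h1 : ((m-1)*(m-1)+1-1) = (m-1)*(m-1) := by omega
    rw [h1, hM]
    have h2 : (m-1)*(m-1)*((m-1)*(m-1)) = (m-1)*(m-1)*(m-1)*(m-1) := by ring
    rw [h2])
  obtain ⟨u, hu, hmono2⟩ := erdos_szekeres (a := m) (pg ∘ s)
    (hpginj.comp hs.injective) (le_refl _)
  set k : Fin m → Fin M := s ∘ u with hk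
  have hkmono : StrictMono k := hs.comp hu
  set v : Fin m → Fin n := fun t => V (k t) with hv
  set g : Fin m → Fin n := fun t => predF (V (k t)) with hg
  have hgval : ∀ t, (g t).val = (v t).val - 1 := fun t => rfl
  have hgvlt : ∀ t, g t < v t := by
    intro t
    rw [Fin.lt_def, hgval t]
    have h0 : (v t).val ≠ 0 := hV0 (k t)
    omega
  have hvglt : ∀ t t' : Fin m, t < t' → v t < g t' := by
    intro t t' htt
    have h1 : v t < v t' := V.strictMono (hkmono htt)
    have hne : v t ≠ g t' := by
      intro he
      have hvB : v t ∈ B := hVB (k t)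
      rw [he] at hvB
      exact hVpred (k t') hvB
    rw [Fin.lt_def] at h1 ⊢
    rw [hgval t']
    have hne' : (v t).val ≠ (v t').val - 1 := by
      intro hh
      exact hne (Fin.ext (by rw [hgval t', ← hh]))
    have h0 : (v t').val ≠ 0 := hV0 (k t')
    omega
  have hB1 : ∀ b : Bool, (if b then StrictMono (pv ∘ s) else StrictAnti (pv ∘ s)) →
      ∀ t t' : Fin m, t < t' →
        (if b then π.symm (v t) < π.symm (v t') else π.symm (v t') < π.symm (v t)) := by
    intro b hb t t' htt
    cases b
    · rw [if_neg (by simp)] at hb ⊢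
      exact hb (hu htt)
    · rw [if_pos (by simp)] at hb ⊢
      exact hb (hu htt)
  have hB2 : ∀ b : Bool, (if b then StrictMono (pg ∘ s ∘ u) else StrictAnti (pg ∘ s ∘ u)) →
      ∀ t t' : Fin m, t < t' →
        (if b then π.symm (g t) < π.symm (g t') else π.symm (g t') < π.symm (g t)) := by
    intro b hb t t' htt
    cases b
    · rw [if_neg (by simp)] at hb ⊢
      exact hb htt
    · rw [if_pos (by simp)] at hb ⊢
      exact hb htt
  rcases hmono1 with hm1 | hm1 <;> rcases hmono2 with hm2 | hm2
  · exact ⟨true, true, contains_monAlt_of_struct π true true v g i hgvlt hvglt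
      (fun t => hpvle (k t)) (fun t => hpggt (k t))
      (hB1 true (by rw [if_pos (by simp)]; exact hm1))
      (hB2 true (by rw [if_pos (by simp)]; exact hm2))⟩
  · exact ⟨true, false, contains_monAlt_of_struct π true false v g i hgvlt hvglt
      (fun t => hpvle (k t)) (fun t => hpggt (k t))
      (hB1 true (by rw [if_pos (by simp)]; exact hm1))
      (hB2 false (by rw [if_neg (by simp)]; exact hm2))⟩
  · exact ⟨false, true, contains_monAlt_of_struct π false true v g i hgvlt hvglt
      (fun t => hpvle (k t)) (fun t => hpggt (k t))
      (hB1 false (by rw [if_neg (by simp)]; exact hm1))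
      (hB2 true (by rw [if_pos (by simp)]; exact hm2))⟩
  · exact ⟨false, false, contains_monAlt_of_struct π false false v g i hgvlt hvglt
      (fun t => hpvle (k t)) (fun t => hpggt (k t))
      (hB1 false (by rw [if_neg (by simp)]; exact hm1))
      (hB2 false (by rw [if_neg (by simp)]; exact hm2))⟩


end

end PPM

open PPM

/-- for a permutation class `C`, unbounded horizontal path-width,
containing arbitrarily large horizontal alternations, and containing a horizontal
monotone juxtaposition as a subclass are equivalent. -/
theorem unbounded_hpw_tfae (C : PermClass) (hC : IsPermClass C) :
    ((∀ K, ∃ n, ∃ π ∈ C n, K < hpw π) ↔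
      (∀ m, ∃ n, ∃ π ∈ C n, 2 * m ≤ n ∧ IsHorizAlt π)) ∧
    ((∀ K, ∃ n, ∃ π ∈ C n, K < hpw π) ↔
      (∃ b₁ b₂ : Bool, ∀ (n : ℕ) (π : Equiv.Perm (Fin n)),
        MonGriddable (juxH b₁ b₂) π → π ∈ C n)) := by
  have P1 : (∀ K, ∃ n, ∃ π ∈ C n, K < hpw π) →
      ∀ m : ℕ, ∃ b₁ b₂ : Bool, monAlt b₁ b₂ m ∈ C (2 * m) := by
    intro hA m
    obtain ⟨n, π, hπ, hbig⟩ := hA ((m-1)*(m-1)*(m-1)*(m-1) + 2)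
    obtain ⟨b₁, b₂, hcon⟩ := exists_contains_monAlt (m := m) π (by omega)
    exact ⟨b₁, b₂, hC π _ hπ hcon⟩
  have P2 : (∀ K, ∃ n, ∃ π ∈ C n, K < hpw π) →
      ∃ b₁ b₂ : Bool, ∀ m₀, ∃ m, m₀ ≤ m ∧ monAlt b₁ b₂ m ∈ C (2 * m) := by
    intro hA
    by_contra hcon
    push_neg at hcon
    obtain ⟨k1, h1⟩ := hcon true true
    obtain ⟨k2, h2⟩ := hcon true false
    obtain ⟨k3, h3⟩ := hcon false true
    obtain ⟨k4, h4⟩ := hcon false false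
    obtain ⟨b₁, b₂, hmem⟩ := P1 hA (k1+k2+k3+k4)
    cases b₁ <;> cases b₂
    · exact h4 _ (by omega) hmem
    · exact h3 _ (by omega) hmem
    · exact h2 _ (by omega) hmem
    · exact h1 _ (by omega) hmem
  have P3 : (∃ b₁ b₂ : Bool, ∀ m₀, ∃ m, m₀ ≤ m ∧ monAlt b₁ b₂ m ∈ C (2 * m)) →
      (∃ b₁ b₂ : Bool, ∀ (n : ℕ) (π : Equiv.Perm (Fin n)),
        MonGriddable (juxH b₁ b₂) π → π ∈ C n) := by
    rintro ⟨b₁, b₂, hm⟩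
    refine ⟨b₁, b₂, fun n π hgrid => ?_⟩
    obtain ⟨m, hmn, hmem⟩ := hm n
    exact hC _ π hmem (contains_of_griddable hmn π hgrid)
  have P4 : (∃ b₁ b₂ : Bool, ∀ (n : ℕ) (π : Equiv.Perm (Fin n)),
        MonGriddable (juxH b₁ b₂) π → π ∈ C n) →
      (∀ K, ∃ n, ∃ π ∈ C n, K < hpw π) := by
    rintro ⟨b₁, b₂, hall⟩ K
    refine ⟨2*(K+1), monAlt b₁ b₂ (K+1),
      hall _ _ (monAlt_griddable b₁ b₂ (K+1)), ?_⟩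
    have := hpw_ge_of_alt (monAlt b₁ b₂ (K+1)) (monAlt_isHorizAlt b₁ b₂ (K+1))
      (by omega) (le_refl _)
    omega
  have P5 : (∃ b₁ b₂ : Bool, ∀ m₀, ∃ m, m₀ ≤ m ∧ monAlt b₁ b₂ m ∈ C (2 * m)) →
      (∀ m, ∃ n, ∃ π ∈ C n, 2 * m ≤ n ∧ IsHorizAlt π) := by
    rintro ⟨b₁, b₂, hm⟩ m
    obtain ⟨m', hmm, hmem⟩ := hm m
    exact ⟨2*m', monAlt b₁ b₂ m', hmem, by omega, monAlt_isHorizAlt _ _ _⟩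
  have P6 : (∀ m, ∃ n, ∃ π ∈ C n, 2 * m ≤ n ∧ IsHorizAlt π) →
      (∀ K, ∃ n, ∃ π ∈ C n, K < hpw π) := by
    intro hb K
    obtain ⟨n, π, hπ, hn, halt⟩ := hb (K+1)
    refine ⟨n, π, hπ, ?_⟩
    have := hpw_ge_of_alt π halt (by omega) hn
    omega
  exact ⟨⟨fun hA => P5 (P2 hA), P6⟩, ⟨fun hA => P3 (P2 hA), P4⟩⟩
end

section
/- Let C be a permutation class of bounded horizontal path-width. Then there is a constant α (depending only on C) such that for every π ∈ C and every subset S of the points of π with intv_x(S) = k, we have intv_y(S) ≤ α·k. -/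
open PPM

section Aux

variable {n : ℕ}

/-- `F` is a valid disjoint interval cover of `A`. -/
def IsCov (F : Finset (Finset (Fin n))) (A : Finset (Fin n)) : Prop :=
  (∀ I ∈ F, ∃ a b : Fin n, I = Finset.Icc a b) ∧
  (F : Set (Finset (Fin n))).PairwiseDisjoint id ∧ F.sup id = A

lemma intervalicity_le_of_isCov {F : Finset (Finset (Fin n))} {A : Finset (Fin n)}
    (h : IsCov F A) : intervalicity A ≤ F.card :=
  Nat.sInf_le ⟨F, rfl, h.1, h.2.1, h.2.2⟩

/-- Left endpoints of runs of `A`. -/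
def lends (A : Finset (Fin n)) : Finset (Fin n) :=
  A.filter (fun a => ∀ b ∈ A, b.val + 1 ≠ a.val)

/-- Right endpoints of runs of `A`. -/
def rends (A : Finset (Fin n)) : Finset (Fin n) :=
  A.filter (fun a => ∀ b ∈ A, a.val + 1 ≠ b.val)

/-- The run (maximal interval inside `A`) through `a`. -/
def runOf (A : Finset (Fin n)) (a : Fin n) : Finset (Fin n) :=
  A.filter (fun b => Finset.Icc (min a b) (max a b) ⊆ A)

lemma mem_runOf {A : Finset (Fin n)} {a b : Fin n} :
    b ∈ runOf A a ↔ b ∈ A ∧ Finset.Icc (min a b) (max a b) ⊆ A := by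
  simp [runOf]

lemma mem_runOf_self {A : Finset (Fin n)} {a : Fin n} (ha : a ∈ A) : a ∈ runOf A a := by
  rw [mem_runOf]
  refine ⟨ha, ?_⟩
  simp [Finset.Icc_self, ha]

lemma runOf_subset {A : Finset (Fin n)} {a : Fin n} : runOf A a ⊆ A :=
  Finset.filter_subset _ _

lemma icc_sub {A : Finset (Fin n)} {a c d : Fin n}
    (hc : Finset.Icc (min a c) (max a c) ⊆ A)
    (hd : Finset.Icc (min a d) (max a d) ⊆ A) :
    Finset.Icc (min c d) (max c d) ⊆ A := by
  intro e he
  rw [Finset.mem_Icc] at he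
  rcases le_total e a with h | h
  · rcases min_le_iff.mp he.1 with h1 | h1
    · exact hc (Finset.mem_Icc.mpr ⟨le_trans (min_le_right a c) h1, le_trans h (le_max_left a c)⟩)
    · exact hd (Finset.mem_Icc.mpr ⟨le_trans (min_le_right a d) h1, le_trans h (le_max_left a d)⟩)
  · rcases le_max_iff.mp he.2 with h1 | h1
    · exact hc (Finset.mem_Icc.mpr ⟨le_trans (min_le_left a c) h, le_trans h1 (le_max_right a c)⟩)
    · exact hd (Finset.mem_Icc.mpr ⟨le_trans (min_le_left a d) h, le_trans h1 (le_max_right a d)⟩)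

lemma mem_runOf_symm {A : Finset (Fin n)} {a c : Fin n} (h : c ∈ runOf A a) :
    a ∈ runOf A c := by
  rw [mem_runOf] at h ⊢
  have ha : a ∈ A := h.2 (Finset.mem_Icc.mpr ⟨min_le_left a c, le_max_left a c⟩)
  refine ⟨ha, ?_⟩
  rw [min_comm, max_comm]
  exact h.2

lemma runOf_eq_of_mem {A : Finset (Fin n)} {a c : Fin n} (h : c ∈ runOf A a) :
    runOf A a = runOf A c := by
  have h' := mem_runOf_symm h
  apply Finset.Subset.antisymm
  · intro d hd
    rw [mem_runOf] at *
    exact ⟨hd.1, icc_sub h.2 hd.2⟩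
  · intro d hd
    rw [mem_runOf] at *
    exact ⟨hd.1, icc_sub h'.2 hd.2⟩

lemma runOf_eq_Icc {A : Finset (Fin n)} {a : Fin n} (ha : a ∈ A) :
    ∃ m M : Fin n, runOf A a = Finset.Icc m M := by
  have hne : (runOf A a).Nonempty := ⟨a, mem_runOf_self ha⟩
  refine ⟨(runOf A a).min' hne, (runOf A a).max' hne, ?_⟩
  set m := (runOf A a).min' hne with hm
  set M := (runOf A a).max' hne with hM
  have hma : m ≤ a := Finset.min'_le _ _ (mem_runOf_self ha)
  have haM : a ≤ M := Finset.le_max' _ _ (mem_runOf_self ha)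
  have hmem_m := Finset.min'_mem (runOf A a) hne
  have hmem_M := Finset.max'_mem (runOf A a) hne
  have hImA : Finset.Icc m a ⊆ A := by
    have := (mem_runOf.mp hmem_m).2
    rwa [min_eq_right hma, max_eq_left hma] at this
  have haMA : Finset.Icc a M ⊆ A := by
    have := (mem_runOf.mp hmem_M).2
    rwa [min_eq_left haM, max_eq_right haM] at this
  have hIA : Finset.Icc m M ⊆ A := by
    intro x hx
    rw [Finset.mem_Icc] at hx
    rcases le_total x a with h | h
    · exact hImA (Finset.mem_Icc.mpr ⟨hx.1, h⟩)
    · exact haMA (Finset.mem_Icc.mpr ⟨h, hx.2⟩)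
  apply Finset.Subset.antisymm
  · intro b hb
    exact Finset.mem_Icc.mpr ⟨Finset.min'_le _ _ hb, Finset.le_max' _ _ hb⟩
  · intro e he
    rw [Finset.mem_Icc] at he
    rw [mem_runOf]
    refine ⟨hIA (Finset.mem_Icc.mpr he), fun x hx => ?_⟩
    rw [Finset.mem_Icc] at hx
    exact hIA (Finset.mem_Icc.mpr ⟨le_trans (le_min hma he.1) hx.1,
      le_trans hx.2 (max_le haM he.2)⟩)

lemma isCov_runImage (A : Finset (Fin n)) : IsCov (A.image (runOf A)) A := by
  refine ⟨?_, ?_, ?_⟩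
  · intro I hI
    obtain ⟨a, ha, rfl⟩ := Finset.mem_image.mp hI
    exact runOf_eq_Icc ha
  · intro I hI J hJ hIJ
    simp only [Finset.coe_image, Set.mem_image, Finset.mem_coe] at hI hJ
    obtain ⟨a, ha, rfl⟩ := hI
    obtain ⟨b, hb, rfl⟩ := hJ
    simp only [Function.onFun, id_eq]
    rw [Finset.disjoint_left]
    intro c hcI hcJ
    exact hIJ ((runOf_eq_of_mem hcI).trans (runOf_eq_of_mem hcJ).symm)
  · apply Finset.Subset.antisymm
    · intro x hx
      rw [Finset.mem_sup] at hx
      obtain ⟨I, hI, hxI⟩ := hx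
      obtain ⟨a, _, rfl⟩ := Finset.mem_image.mp hI
      exact runOf_subset hxI
    · intro x hx
      rw [Finset.mem_sup]
      exact ⟨runOf A x, Finset.mem_image_of_mem _ hx, mem_runOf_self hx⟩

lemma exists_cov (A : Finset (Fin n)) : ∃ F, IsCov F A ∧ F.card = intervalicity A := by
  have hne : {m | ∃ F : Finset (Finset (Fin n)), F.card = m ∧
      (∀ I ∈ F, ∃ a b : Fin n, I = Finset.Icc a b) ∧
      (F : Set (Finset (Fin n))).PairwiseDisjoint id ∧
      F.sup id = A}.Nonempty := by
    have h := isCov_runImage A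
    exact ⟨(A.image (runOf A)).card, A.image (runOf A), rfl, h.1, h.2.1, h.2.2⟩
  obtain ⟨F, hcard, h1, h2, h3⟩ := Nat.sInf_mem hne
  exact ⟨F, ⟨h1, h2, h3⟩, hcard⟩

end Aux
section Aux2

variable {n : ℕ}

lemma min'_mem_lends {A : Finset (Fin n)} {a : Fin n} (ha : a ∈ A)
    (hne : (runOf A a).Nonempty) : (runOf A a).min' hne ∈ lends A := by
  set m := (runOf A a).min' hne with hm
  have hmem_m := Finset.min'_mem (runOf A a) hne
  have hmA : m ∈ A := runOf_subset hmem_m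
  have hma : m ≤ a := Finset.min'_le _ _ (mem_runOf_self ha)
  have hIma : Finset.Icc m a ⊆ A := by
    have := (mem_runOf.mp hmem_m).2
    rwa [min_eq_right hma, max_eq_left hma] at this
  rw [lends, Finset.mem_filter]
  refine ⟨hmA, fun b hb hb1 => ?_⟩
  have hbm : b < m := by rw [Fin.lt_def]; omega
  have hba : b ≤ a := le_of_lt (lt_of_lt_of_le hbm hma)
  have hbrun : b ∈ runOf A a := by
    rw [mem_runOf, min_comm, max_comm, min_eq_left hba, max_eq_right hba]
    refine ⟨hb, fun x hx => ?_⟩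
    rw [Finset.mem_Icc] at hx
    rcases eq_or_lt_of_le hx.1 with h | h
    · rwa [← h]
    · have hmx : m ≤ x := by
        rw [Fin.le_def]; rw [Fin.lt_def] at h; omega
      exact hIma (Finset.mem_Icc.mpr ⟨hmx, hx.2⟩)
  exact absurd (Finset.min'_le _ _ hbrun) (not_le.mpr hbm)

lemma intervalicity_le_lends_card (A : Finset (Fin n)) :
    intervalicity A ≤ (lends A).card := by
  refine le_trans (intervalicity_le_of_isCov (isCov_runImage A)) ?_
  have : (lends A).card = (Finset.image (fun x : Fin n => (x : WithTop (Fin n))) (lends A)).card :=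
    (Finset.card_image_of_injective _ (fun x y h => by exact_mod_cast h)).symm
  rw [this]
  apply Finset.card_le_card_of_injOn (fun I => I.min)
  · intro I hI
    obtain ⟨a, ha, rfl⟩ := Finset.mem_image.mp hI
    have hne : (runOf A a).Nonempty := ⟨a, mem_runOf_self ha⟩
    simp only [Finset.mem_coe]
    rw [← Finset.coe_min' hne]
    exact Finset.mem_image_of_mem _ (min'_mem_lends ha hne)
  · intro I hI J hJ hmin
    obtain ⟨a, ha, rfl⟩ := Finset.mem_image.mp hI
    obtain ⟨b, hb, rfl⟩ := Finset.mem_image.mp hJ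
    have hneI : (runOf A a).Nonempty := ⟨a, mem_runOf_self ha⟩
    have hneJ : (runOf A b).Nonempty := ⟨b, mem_runOf_self hb⟩
    have hmin' : (runOf A a).min = (runOf A b).min := hmin
    rw [← Finset.coe_min' hneI, ← Finset.coe_min' hneJ] at hmin'
    have heq : (runOf A a).min' hneI = (runOf A b).min' hneJ := by exact_mod_cast hmin'
    calc runOf A a = runOf A ((runOf A a).min' hneI) :=
          runOf_eq_of_mem (Finset.min'_mem _ _)
      _ = runOf A ((runOf A b).min' hneJ) := by rw [heq]
      _ = runOf A b := (runOf_eq_of_mem (Finset.min'_mem _ _)).symm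

lemma lends_card_le_of_isCov {F : Finset (Finset (Fin n))} {A : Finset (Fin n)}
    (h : IsCov F A) : (lends A).card ≤ F.card := by
  obtain ⟨hint, hdisj, hsup⟩ := h
  have hexI : ∀ a ∈ lends A, ∃ I ∈ F, a ∈ I := by
    intro a ha
    have : a ∈ A := Finset.mem_of_mem_filter _ ha
    rw [← hsup, Finset.mem_sup] at this
    exact this
  classical
  choose f hfF hfmem using fun a (ha : a ∈ lends A) => hexI a ha
  -- a ∈ lends A, a ∈ I = Icc c d ∈ F  →  a = c
  have hleft : ∀ a (ha : a ∈ lends A) c d, f a ha = Finset.Icc c d → a = c := by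
    intro a ha c d hIcc
    have hmem : a ∈ Finset.Icc c d := hIcc ▸ hfmem a ha
    rw [Finset.mem_Icc] at hmem
    rcases eq_or_lt_of_le hmem.1 with h | h
    · exact h.symm
    · exfalso
      have h1 : 1 ≤ a.val := by rw [Fin.lt_def] at h; omega
      set p : Fin n := ⟨a.val - 1, lt_of_le_of_lt (Nat.sub_le _ _) a.isLt⟩ with hp
      have hpI : p ∈ Finset.Icc c d := by
        rw [Finset.mem_Icc]
        constructor
        · rw [Fin.le_def]; rw [Fin.lt_def] at h; simp [hp]; omega
        · rw [Fin.le_def] at hmem ⊢; simp [hp]; omega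
      have hpA : p ∈ A := by
        rw [← hsup, Finset.mem_sup]
        exact ⟨f a ha, hfF a ha, hIcc ▸ hpI⟩
      have := (Finset.mem_filter.mp ha).2 p hpA
      simp [hp] at this
      omega
  -- package f into a total function
  have := Finset.card_le_card_of_injOn (s := lends A) (t := F)
    (f := fun a => if ha : a ∈ lends A then f a ha else ∅) ?_ ?_
  · exact this
  · intro a ha
    simp only [Finset.mem_coe] at ha ⊢
    simp only [ha, dif_pos]
    exact hfF a ha
  · intro a ha b hb hab
    simp only [Finset.mem_coe] at ha hb
    simp only [ha, hb, dif_pos] at hab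
    obtain ⟨c, d, hcd⟩ := hint _ (hfF a ha)
    have h1 := hleft a ha c d hcd
    have h2 := hleft b hb c d (hab ▸ hcd)
    rw [h1, h2]

lemma rends_card_le_of_isCov {F : Finset (Finset (Fin n))} {A : Finset (Fin n)}
    (h : IsCov F A) : (rends A).card ≤ F.card := by
  obtain ⟨hint, hdisj, hsup⟩ := h
  have hexI : ∀ a ∈ rends A, ∃ I ∈ F, a ∈ I := by
    intro a ha
    have : a ∈ A := Finset.mem_of_mem_filter _ ha
    rw [← hsup, Finset.mem_sup] at this
    exact this
  classical
  choose f hfF hfmem using fun a (ha : a ∈ rends A) => hexI a ha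
  have hright : ∀ a (ha : a ∈ rends A) c d, f a ha = Finset.Icc c d → a = d := by
    intro a ha c d hIcc
    have hmem : a ∈ Finset.Icc c d := hIcc ▸ hfmem a ha
    rw [Finset.mem_Icc] at hmem
    rcases eq_or_lt_of_le hmem.2 with h | h
    · exact h
    · exfalso
      have h1 : a.val + 1 < n := lt_of_le_of_lt (by rw [Fin.lt_def] at h; omega) d.isLt
      set p : Fin n := ⟨a.val + 1, h1⟩ with hp
      have hpI : p ∈ Finset.Icc c d := by
        rw [Finset.mem_Icc]
        constructor
        · rw [Fin.le_def] at hmem ⊢; simp [hp]; omega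
        · rw [Fin.le_def]; rw [Fin.lt_def] at h; simp [hp]; omega
      have hpA : p ∈ A := by
        rw [← hsup, Finset.mem_sup]
        exact ⟨f a ha, hfF a ha, hIcc ▸ hpI⟩
      have := (Finset.mem_filter.mp ha).2 p hpA
      simp [hp] at this
  have := Finset.card_le_card_of_injOn (s := rends A) (t := F)
    (f := fun a => if ha : a ∈ rends A then f a ha else ∅) ?_ ?_
  · exact this
  · intro a ha
    simp only [Finset.mem_coe] at ha ⊢
    simp only [ha, dif_pos]
    exact hfF a ha
  · intro a ha b hb hab
    simp only [Finset.mem_coe] at ha hb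
    simp only [ha, hb, dif_pos] at hab
    obtain ⟨c, d, hcd⟩ := hint _ (hfF a ha)
    have h1 := hright a ha c d hcd
    have h2 := hright b hb c d (hab ▸ hcd)
    rw [h1, h2]

lemma lends_card_le_intervalicity (A : Finset (Fin n)) :
    (lends A).card ≤ intervalicity A := by
  obtain ⟨F, hF, hcard⟩ := exists_cov A
  exact hcard ▸ lends_card_le_of_isCov hF

lemma rends_card_le_intervalicity (A : Finset (Fin n)) :
    (rends A).card ≤ intervalicity A := by
  obtain ⟨F, hF, hcard⟩ := exists_cov A
  exact hcard ▸ rends_card_le_of_isCov hF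

end Aux2
section Aux3

variable {n : ℕ}

lemma intervalicity_empty : intervalicity (∅ : Finset (Fin n)) = 0 := by
  apply Nat.le_antisymm _ (Nat.zero_le _)
  apply Nat.sInf_le
  exact ⟨∅, rfl, by simp, by simp, rfl⟩

lemma lends_union_subset (A B : Finset (Fin n)) :
    lends (A ∪ B) ⊆ lends A ∪ lends B := by
  intro a ha
  rw [lends, Finset.mem_filter] at ha
  obtain ⟨hab, hpred⟩ := ha
  rw [Finset.mem_union] at hab
  rw [Finset.mem_union, lends, lends, Finset.mem_filter, Finset.mem_filter]
  rcases hab with h | h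
  · exact Or.inl ⟨h, fun b hb => hpred b (Finset.mem_union_left _ hb)⟩
  · exact Or.inr ⟨h, fun b hb => hpred b (Finset.mem_union_right _ hb)⟩

lemma intervalicity_union_le (A B : Finset (Fin n)) :
    intervalicity (A ∪ B) ≤ intervalicity A + intervalicity B := by
  calc intervalicity (A ∪ B) ≤ (lends (A ∪ B)).card := intervalicity_le_lends_card _
    _ ≤ (lends A ∪ lends B).card := Finset.card_le_card (lends_union_subset A B)
    _ ≤ (lends A).card + (lends B).card := Finset.card_union_le _ _
    _ ≤ intervalicity A + intervalicity B :=
        add_le_add (lends_card_le_intervalicity A) (lends_card_le_intervalicity B)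

lemma intervalicity_sdiff_le (A B : Finset (Fin n)) :
    intervalicity (A \ B) ≤ intervalicity A + intervalicity B := by
  have key : (lends (A \ B)).card ≤ (lends A).card + (rends B).card := by
    calc (lends (A \ B)).card
        ≤ (lends (A \ B) \ lends A).card + (lends A).card :=
          Finset.card_le_card_sdiff_add_card
      _ ≤ (rends B).card + (lends A).card := by
          apply Nat.add_le_add_right
          apply Finset.card_le_card_of_injOn
            (f := fun a => (⟨a.val - 1, lt_of_le_of_lt (Nat.sub_le _ _) a.isLt⟩ : Fin n))
          · intro a ha
            simp only [Finset.mem_coe] at ha ⊢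
            rw [Finset.mem_sdiff] at ha
            obtain ⟨hal, hanl⟩ := ha
            rw [lends, Finset.mem_filter] at hal
            obtain ⟨haAB, hpred⟩ := hal
            rw [Finset.mem_sdiff] at haAB
            have : ¬ (∀ b ∈ A, b.val + 1 ≠ a.val) := by
              intro hc
              exact hanl (Finset.mem_filter.mpr ⟨haAB.1, hc⟩)
            push_neg at this
            obtain ⟨b, hbA, hb1⟩ := this
            have hbB : b ∈ B := by
              by_contra hbB
              exact hpred b (Finset.mem_sdiff.mpr ⟨hbA, hbB⟩) hb1
            have hbeq : b = (⟨a.val - 1, lt_of_le_of_lt (Nat.sub_le _ _) a.isLt⟩ : Fin n) := by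
              apply Fin.ext; simp; omega
            rw [← hbeq]
            rw [rends, Finset.mem_filter]
            refine ⟨hbB, fun c hcB hc1 => ?_⟩
            have : c = a := by apply Fin.ext; omega
            exact haAB.2 (this ▸ hcB)
          · intro a ha b hb hab
            simp only [Finset.mem_coe, Finset.mem_sdiff] at ha hb
            have ha1 : 1 ≤ a.val := by
              obtain ⟨hal, hanl⟩ := ha
              rw [lends, Finset.mem_filter] at hal
              by_contra hc
              exact hanl (Finset.mem_filter.mpr ⟨(Finset.mem_sdiff.mp hal.1).1,
                fun b hbA hb1 => by omega⟩)
            have hb1 : 1 ≤ b.val := by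
              obtain ⟨hbl, hbnl⟩ := hb
              rw [lends, Finset.mem_filter] at hbl
              by_contra hc
              exact hbnl (Finset.mem_filter.mpr ⟨(Finset.mem_sdiff.mp hbl.1).1,
                fun c hcA hc1 => by omega⟩)
            have := Fin.mk.injEq .. ▸ hab
            apply Fin.ext
            have : a.val - 1 = b.val - 1 := Fin.mk.inj_iff.mp hab
            omega
      _ = (lends A).card + (rends B).card := Nat.add_comm _ _
  calc intervalicity (A \ B) ≤ (lends (A \ B)).card := intervalicity_le_lends_card _
    _ ≤ (lends A).card + (rends B).card := key
    _ ≤ intervalicity A + intervalicity B :=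
        add_le_add (lends_card_le_intervalicity A) (rends_card_le_intervalicity B)

lemma intervalicity_sup_le {ι : Type*} (F : Finset ι) (g : ι → Finset (Fin n)) :
    intervalicity (F.sup g) ≤ ∑ I ∈ F, intervalicity (g I) := by
  classical
  induction F using Finset.cons_induction with
  | empty => simp [intervalicity_empty]
  | cons a s ha ih =>
    rw [Finset.sup_cons, Finset.sum_cons]
    refine le_trans ?_ (add_le_add le_rfl ih)
    exact intervalicity_union_le _ _

end Aux3
section Aux4

variable {n : ℕ}

lemma prefix_intv_le {B : ℕ} {π : Equiv.Perm (Fin n)} (h : hpw π ≤ B) (i : Fin n) :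
    intervalicity ((Finset.univ.filter (fun j => j ≤ i)).image (fun j => π j)) ≤ B := by
  have h' : Finset.univ.sup (fun i => gridComplexity (prefixSet π 1 i)) ≤ B := h
  have h1 : gridComplexity (prefixSet π 1 i) ≤ B :=
    le_trans (Finset.le_sup (f := fun i => gridComplexity (prefixSet π 1 i))
      (Finset.mem_univ i)) h'
  have h2 : intervalicity ((prefixSet π 1 i).image Prod.snd) ≤ B :=
    le_trans (le_max_right _ _) h1
  have h3 : (prefixSet π 1 i).image Prod.snd
      = (Finset.univ.filter (fun j => j ≤ i)).image (fun j => π j) := by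
    rw [prefixSet, Finset.image_image]
    simp [Function.comp_def]
  rwa [h3] at h2

lemma intv_image_Icc_le {B : ℕ} {π : Equiv.Perm (Fin n)} (h : hpw π ≤ B) (a b : Fin n) :
    intervalicity ((Finset.Icc a b).image (fun j => π j)) ≤ B + B := by
  have hsplit : Finset.Icc a b
      = (Finset.univ.filter (fun j => j ≤ b)) \ (Finset.univ.filter (fun j => j < a)) := by
    ext x
    simp only [Finset.mem_Icc, Finset.mem_sdiff, Finset.mem_filter, Finset.mem_univ,
      true_and, not_lt]
    tauto
  rw [hsplit, Finset.image_sdiff _ _ (Equiv.injective π)]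
  refine le_trans (intervalicity_sdiff_le _ _) (add_le_add (prefix_intv_le h b) ?_)
  rcases Nat.eq_zero_or_pos a.val with h0 | h0
  · have : Finset.univ.filter (fun j => j < a) = (∅ : Finset (Fin n)) := by
      ext x
      simp only [Finset.mem_filter, Finset.mem_univ, true_and, Finset.notMem_empty,
        iff_false]
      rw [Fin.lt_def]
      omega
    rw [this]
    simp [intervalicity_empty]
  · have : Finset.univ.filter (fun j => j < a)
        = Finset.univ.filter (fun j => j ≤ (⟨a.val - 1, lt_of_le_of_lt (Nat.sub_le _ _) a.isLt⟩ : Fin n)) := by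
      ext x
      simp only [Finset.mem_filter, Finset.mem_univ, true_and]
      rw [Fin.lt_def, Fin.le_def]
      simp
      omega
    rw [this]
    exact prefix_intv_le h _

end Aux4
/-- for a class `C` of bounded horizontal path-width there is `α`
such that `intv_y(S) ≤ α · intv_x(S)` for every point subset `S` of any `π ∈ C`. -/
theorem intv_y_le_of_bounded_hpw (C : PermClass) (hC : IsPermClass C)
    (hbdd : ∃ B, ∀ (n : ℕ) (π : Equiv.Perm (Fin n)), π ∈ C n → hpw π ≤ B) :
    ∃ α : ℕ, ∀ (n : ℕ) (π : Equiv.Perm (Fin n)), π ∈ C n →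
      ∀ S : Finset (Fin n × Fin n), S ⊆ diagram π →
      ∀ k : ℕ, intervalicity (S.image Prod.fst) = k →
        intervalicity (S.image Prod.snd) ≤ α * k := by
  obtain ⟨B, hB⟩ := hbdd
  refine ⟨2 * B, fun n π hπ S hS k hk => ?_⟩
  have hbd : hpw π ≤ B := hB n π hπ
  set A := S.image Prod.fst with hA
  obtain ⟨F, hF, hFcard⟩ := exists_cov A
  have hk' : F.card = k := hFcard.trans hk
  have hdiag : ∀ p ∈ S, p.2 = π p.1 := by
    intro p hp
    have := hS hp
    rw [diagram, Finset.mem_image] at this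
    obtain ⟨i, _, hi⟩ := this
    rw [← hi]
  have hsnd : S.image Prod.snd = A.image (fun x => π x) := by
    ext y
    simp only [hA, Finset.mem_image]
    constructor
    · rintro ⟨p, hp, rfl⟩
      exact ⟨p.1, ⟨p, hp, rfl⟩, (hdiag p hp).symm⟩
    · rintro ⟨x, ⟨p, hp, rfl⟩, rfl⟩
      exact ⟨p, hp, hdiag p hp⟩
  have hAsup : A.image (fun x => π x) = F.sup (fun I => I.image (fun x => π x)) := by
    rw [← hF.2.2]
    ext y
    constructor
    · intro hy
      rw [Finset.mem_image] at hy
      obtain ⟨x, hx, rfl⟩ := hy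
      rw [Finset.mem_sup] at hx
      obtain ⟨I, hI, hxI⟩ := hx
      rw [Finset.mem_sup]
      exact ⟨I, hI, Finset.mem_image_of_mem _ hxI⟩
    · intro hy
      rw [Finset.mem_sup] at hy
      obtain ⟨I, hI, hy⟩ := hy
      rw [Finset.mem_image] at hy
      obtain ⟨x, hx, rfl⟩ := hy
      exact Finset.mem_image_of_mem _ (Finset.mem_sup.mpr ⟨I, hI, hx⟩)
  calc intervalicity (S.image Prod.snd)
      = intervalicity (F.sup (fun I => I.image (fun x => π x))) := by rw [hsnd, hAsup]
    _ ≤ ∑ I ∈ F, intervalicity (I.image (fun x => π x)) := intervalicity_sup_le F _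
    _ ≤ ∑ _I ∈ F, (B + B) := by
        apply Finset.sum_le_sum
        intro I hI
        obtain ⟨a, b, rfl⟩ := hF.1 I hI
        exact intv_image_Icc_le hbd a b
    _ = F.card * (B + B) := by rw [Finset.sum_const, smul_eq_mul]
    _ = 2 * B * k := by rw [hk']; ring
end
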